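/- arXiv:1603.09187 — 3 statements merged into one kernel-verified Lean document; each statement's English description precedes it below -/
import Mathlib

section
/- Let G = G₁ △ G₂ be the Hajós join of two graphs G₁ and G₂, and let k ≥ 3 be an integer. Then G is critical with chromatic number k+1 if and only if both G₁ and G₂ are critical with chromatic number k+1. -/
open SimpleGraph

/-- There exist `n` pairwise edge-disjoint `u`-`v` paths in `G`. -/
def HasEdgeDisjointPaths {V : Type} (G : SimpleGraph V) (u v : V) (n : ℕ) : Prop :=
  ∃ P : Fin n → G.Walk u v, (∀ i, (P i).IsPath) ∧
    ∀ i j, i ≠ j → ∀ e, e ∈ (P i).edges → e ∉ (P j).edges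

/-- The local edge connectivity `λ_G(u,v)`: the maximum number of pairwise
edge-disjoint `u`-`v` paths in `G`. -/
noncomputable def localEdgeConn {V : Type} (G : SimpleGraph V) (u v : V) : ℕ :=
  sSup {n | HasEdgeDisjointPaths G u v n}

/-- The maximum local edge connectivity `λ(G)` (equal to `0` if `G` has at most
one vertex). -/
noncomputable def maxLocalEdgeConn {V : Type} (G : SimpleGraph V) : ℕ :=
  sSup {n | ∃ u v : V, u ≠ v ∧ n = localEdgeConn G u v}

/-- There exist `n` internally vertex-disjoint `u`-`v` paths in `G`. -/
def HasInternallyDisjointPaths {V : Type} (G : SimpleGraph V) (u v : V) (n : ℕ) : Prop :=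
  ∃ P : Fin n → G.Walk u v, (∀ i, (P i).IsPath) ∧
    ∀ i j, i ≠ j → ∀ x, x ∈ (P i).support → x ∈ (P j).support → x = u ∨ x = v

/-- The local connectivity `κ_G(u,v)`. -/
noncomputable def localConn {V : Type} (G : SimpleGraph V) (u v : V) : ℕ :=
  sSup {n | HasInternallyDisjointPaths G u v n}

/-- The maximum local connectivity `κ(G)`. -/
noncomputable def maxLocalConn {V : Type} (G : SimpleGraph V) : ℕ :=
  sSup {n | ∃ u v : V, u ≠ v ∧ n = localConn G u v}

/-- A graph is critical if every proper subgraph has a smaller chromatic number. -/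
def IsCritical {V : Type} (G : SimpleGraph V) : Prop :=
  ∀ H : G.Subgraph, H ≠ ⊤ → H.coe.chromaticNumber < G.chromaticNumber

/-- The number of connected components of `G`. -/
noncomputable def numComponents {V : Type} (G : SimpleGraph V) : ℕ :=
  Nat.card G.ConnectedComponent

/-- `S` is a separating vertex set of `G`: deleting `S` increases the number of
connected components. -/
def IsSepVertexSet {V : Type} (G : SimpleGraph V) (S : Set V) : Prop :=
  numComponents G < numComponents (G.induce Sᶜ)

/-- `F` is a separating edge set of `G`. -/
def IsSepEdgeSet {V : Type} (G : SimpleGraph V) (F : Set (Sym2 V)) : Prop :=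
  numComponents G < numComponents (G.deleteEdges F)

/-- `G` has no separating vertex (cut vertex). -/
def HasNoCutVertex {V : Type} (G : SimpleGraph V) : Prop :=
  ∀ v : V, ¬ IsSepVertexSet G {v}

/-- `B` is a block of `G`: a maximal connected subgraph of `G` without a cut vertex. -/
def IsBlock {V : Type} (G : SimpleGraph V) (B : G.Subgraph) : Prop :=
  B.coe.Connected ∧ HasNoCutVertex B.coe ∧
    ∀ B' : G.Subgraph, B ≤ B' → B'.coe.Connected → HasNoCutVertex B'.coe → B' = B

/-- `G` is a complete graph of order `n`. -/
def IsCompleteOfOrder {V : Type} (G : SimpleGraph V) (n : ℕ) : Prop :=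
  Nat.card V = n ∧ ∀ v w : V, v ≠ w → G.Adj v w

/-- The cycle on `ZMod n`. -/
def cycleGraphZ (n : ℕ) : SimpleGraph (ZMod n) :=
  SimpleGraph.fromRel (fun a b => b = a + 1)

/-- `G` is an odd cycle. -/
def IsOddCycle {V : Type} (G : SimpleGraph V) : Prop :=
  ∃ n : ℕ, Odd n ∧ 3 ≤ n ∧ Nonempty (G ≃g cycleGraphZ n)

/-- The wheel: a cycle of length `n` together with a hub joined to all its vertices. -/
def wheelGraph (n : ℕ) : SimpleGraph (Option (ZMod n)) :=
  SimpleGraph.fromRel (fun a b =>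
    (a = none ∧ b ≠ none) ∨ ∃ x y, a = some x ∧ b = some y ∧ (cycleGraphZ n).Adj x y)

/-- `G` is an odd wheel. -/
def IsOddWheel {V : Type} (G : SimpleGraph V) : Prop :=
  ∃ n : ℕ, Odd n ∧ 3 ≤ n ∧ Nonempty (G ≃g wheelGraph n)

/-- The Hajós join of `G₁` (with edge `v₁w₁`) and `G₂` (with edge `v₂w₂`):
delete the two edges, identify `v₁` with `v₂`, and add the edge `w₁w₂`. -/
def hajosJoin {V₁ V₂ : Type} (G₁ : SimpleGraph V₁) (G₂ : SimpleGraph V₂)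
    (v₁ w₁ : V₁) (v₂ w₂ : V₂) : SimpleGraph {x : V₁ ⊕ V₂ // x ≠ Sum.inr v₂} :=
  SimpleGraph.fromRel (fun a b =>
    (∃ x y : V₁, a.1 = Sum.inl x ∧ b.1 = Sum.inl y ∧ G₁.Adj x y ∧
        ¬(x = v₁ ∧ y = w₁) ∧ ¬(x = w₁ ∧ y = v₁)) ∨
    (∃ x y : V₂, a.1 = Sum.inr x ∧ b.1 = Sum.inr y ∧ G₂.Adj x y) ∨
    (∃ y : V₂, a.1 = Sum.inl v₁ ∧ b.1 = Sum.inr y ∧ G₂.Adj v₂ y ∧ y ≠ w₂) ∨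
    (a.1 = Sum.inl w₁ ∧ b.1 = Sum.inr w₂))

/-- `G` is (isomorphic to) a Hajós join of `G₁` and `G₂`. -/
def IsHajosJoin {V V₁ V₂ : Type} (G : SimpleGraph V) (G₁ : SimpleGraph V₁)
    (G₂ : SimpleGraph V₂) : Prop :=
  ∃ (v₁ w₁ : V₁) (v₂ w₂ : V₂), G₁.Adj v₁ w₁ ∧ G₂.Adj v₂ w₂ ∧
    Nonempty (G ≃g hajosJoin G₁ G₂ v₁ w₁ v₂ w₂)

/-- The class `ℋ_k`: for `k ≠ 2, 3` it contains the complete graphs of order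
`k+1`; `ℋ₂` consists of the odd cycles; `ℋ₃` contains the odd wheels; and for
`k ≥ 3` the class is closed under Hajós joins. -/
inductive HajosClass : (k : ℕ) → {V : Type} → SimpleGraph V → Prop where
  | complete {k : ℕ} {V : Type} (G : SimpleGraph V) (h2 : k ≠ 2) (h3 : k ≠ 3)
      (h : IsCompleteOfOrder G (k + 1)) : HajosClass k G
  | oddCycle {V : Type} (G : SimpleGraph V) (h : IsOddCycle G) : HajosClass 2 G
  | oddWheel {V : Type} (G : SimpleGraph V) (h : IsOddWheel G) : HajosClass 3 G
  | join {k : ℕ} (hk : 3 ≤ k) {V V₁ V₂ : Type} (G : SimpleGraph V)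
      (G₁ : SimpleGraph V₁) (G₂ : SimpleGraph V₂)
      (h₁ : HajosClass k G₁) (h₂ : HajosClass k G₂) (h : IsHajosJoin G G₁ G₂) :
      HajosClass k G

/-- The class `𝒞_k`: critical graphs with chromatic number `k+1` and maximum
local edge connectivity at most `k`. -/
def InCk {V : Type} (G : SimpleGraph V) (k : ℕ) : Prop :=
  IsCritical G ∧ G.chromaticNumber = (k + 1 : ℕ) ∧ maxLocalEdgeConn G ≤ k

/-- Minimum degree (0 for the empty graph). -/
noncomputable def minDeg {V : Type} [Fintype V] (G : SimpleGraph V) : ℕ :=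
  letI := Classical.decEq V
  letI : DecidableRel G.Adj := Classical.decRel _
  G.minDegree

/-- Maximum degree (0 for the empty graph). -/
noncomputable def maxDeg {V : Type} [Fintype V] (G : SimpleGraph V) : ℕ :=
  letI := Classical.decEq V
  letI : DecidableRel G.Adj := Classical.decRel _
  G.maxDegree

/-- The minimum degree of a subgraph of `G`. -/
noncomputable def subgraphMinDeg {V : Type} [Fintype V] {G : SimpleGraph V}
    (H : G.Subgraph) : ℕ :=
  letI : Fintype H.verts := (Set.toFinite H.verts).fintype
  minDeg H.coe

/-- The coloring number `col(G) = 1 + max {δ(H) : H ⊆ G}`. -/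
noncomputable def coloringNumber {V : Type} [Fintype V] (G : SimpleGraph V) : ℕ :=
  1 + sSup (Set.range (subgraphMinDeg (G := G)))

/-- `∂_G(X)`: the set of edges of `G` with exactly one end in `X`. -/
def edgeBoundary {V : Type} (G : SimpleGraph V) (X : Set V) : Set (Sym2 V) :=
  {e | e ∈ G.edgeSet ∧ ∃ x y : V, e = s(x, y) ∧ x ∈ X ∧ y ∉ X}

/-- The vertices of `X` incident with some edge of `F`. -/
def cutVerts {V : Type} (F : Set (Sym2 V)) (X : Set V) : Set V :=
  {x ∈ X | ∃ e ∈ F, x ∈ e}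

/-- The graph obtained from `G` by identifying the vertices `v` and `w`. -/
def identifyVerts {V : Type} (G : SimpleGraph V) (v w : V) :
    SimpleGraph {x : V // x ≠ w} :=
  SimpleGraph.fromRel (fun a b =>
    G.Adj a.1 b.1 ∨ (a.1 = v ∧ G.Adj w b.1) ∨ (b.1 = v ∧ G.Adj w a.1))

/-- The graph obtained from `H` by adding a new vertex joined to all vertices of `T`. -/
def addVertexJoined {W : Type} (H : SimpleGraph W) (T : Set W) : SimpleGraph (Option W) :=
  SimpleGraph.fromRel (fun a b =>
    (∃ x y : W, a = some x ∧ b = some y ∧ H.Adj x y) ∨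
    (a = none ∧ ∃ y ∈ T, b = some y))

/-- `G` is 3-connected: more than 3 vertices and connected after deleting any
set of fewer than 3 vertices. -/
def IsThreeConnected {V : Type} (G : SimpleGraph V) : Prop :=
  3 < Nat.card V ∧ ∀ S : Set V, S.ncard < 3 → (G.induce Sᶜ).Connected


-- ===== auxiliary development =====


namespace HajosAux

/-- The bundle of conditions equivalent to "critical with chromatic number `k+1`". -/
def Good {W : Type} (G : SimpleGraph W) (k : ℕ) : Prop :=
  G.Colorable (k+1) ∧ ¬ G.Colorable k ∧ (∀ v, ∃ u, G.Adj v u) ∧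
  ∀ x y, G.Adj x y → (G.deleteEdges {s(x,y)}).Colorable k

lemma colorable_of_hom {W W' : Type} {G : SimpleGraph W} {G' : SimpleGraph W'} (f : G →g G')
    {n : ℕ} (h : G'.Colorable n) : G.Colorable n :=
  ⟨h.some.comp f⟩

lemma nat_lt_chrom {W : Type} {G : SimpleGraph W} {k : ℕ} (h : ¬ G.Colorable k) :
    (k : ℕ∞) < G.chromaticNumber := by
  by_contra h'
  exact h (chromaticNumber_le_iff_colorable.mp (not_lt.mp h'))

lemma chrom_eq {W : Type} {G : SimpleGraph W} {k : ℕ} (h1 : G.Colorable (k+1))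
    (h2 : ¬ G.Colorable k) : G.chromaticNumber = ((k+1 : ℕ) : ℕ∞) := by
  refine le_antisymm (chromaticNumber_le_iff_colorable.mpr h1) ?_
  have := nat_lt_chrom h2
  rw [Nat.cast_add, Nat.cast_one]
  exact (ENat.add_one_le_iff (by simp)).mpr this

lemma del_valid {W : Type} {G : SimpleGraph W} {k : ℕ} {e : Sym2 W}
    (C : (G.deleteEdges {e}).Coloring (Fin k)) {x y : W} (h : G.Adj x y)
    (hne : s(x,y) ≠ e) : C x ≠ C y :=
  C.valid (by rw [SimpleGraph.deleteEdges_adj]; exact ⟨h, by simpa using hne⟩)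

lemma forced {W : Type} {G : SimpleGraph W} {v w : W} {k : ℕ} (hvw : G.Adj v w)
    (hnc : ¬ G.Colorable k) (c : W → Fin k)
    (hc : ∀ x y, G.Adj x y → s(x,y) ≠ s(v,w) → c x ≠ c y) : c v = c w := by
  by_contra hne
  apply hnc
  refine ⟨Coloring.mk c ?_⟩
  intro a b hab
  by_cases he : s(a,b) = s(v,w)
  · rw [Sym2.eq_iff] at he
    rcases he with ⟨rfl, rfl⟩ | ⟨rfl, rfl⟩
    · exact hne
    · exact fun h => hne h.symm
  · exact hc a b hab he

lemma colorable_succ {W : Type} {G : SimpleGraph W} {k : ℕ} {v w : W}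
    (h : (G.deleteEdges {s(v,w)}).Colorable k) : G.Colorable (k+1) := by
  classical
  obtain ⟨C⟩ := h
  refine ⟨Coloring.mk (fun x => if x = w then Fin.last k else (C x).castSucc) ?_⟩
  intro a b hab
  by_cases ha : a = w <;> by_cases hb : b = w
  · exact absurd (ha.trans hb.symm) hab.ne
  · simp only [if_pos ha, if_neg hb]
    exact (Fin.castSucc_lt_last _).ne'
  · simp only [if_neg ha, if_pos hb]
    exact (Fin.castSucc_lt_last _).ne
  · simp only [if_neg ha, if_neg hb]
    have hne : s(a, b) ≠ s(v, w) := by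
      intro h
      rw [Sym2.eq_iff] at h
      rcases h with ⟨rfl, rfl⟩ | ⟨rfl, rfl⟩ <;> simp_all
    intro hcc
    exact del_valid C hab hne (Fin.castSucc_injective k hcc)

lemma third_color {k : ℕ} (hk : 3 ≤ k) (a b : Fin k) : ∃ t : Fin k, t ≠ a ∧ t ≠ b := by
  by_contra hcon
  push_neg at hcon
  have hsub : (Finset.univ : Finset (Fin k)) ⊆ {a, b} := by
    intro t _
    simp only [Finset.mem_insert, Finset.mem_singleton]
    by_cases h : t = a
    · exact Or.inl h
    · exact Or.inr (hcon t h)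
  have h1 := Finset.card_le_card hsub
  have h2 : ({a, b} : Finset (Fin k)).card ≤ 2 :=
    (Finset.card_insert_le a {b}).trans (by simp)
  simp only [Finset.card_univ, Fintype.card_fin] at h1
  omega

lemma good_of_crit {W : Type} {G : SimpleGraph W} {k : ℕ} (hk : 3 ≤ k)
    (hc : IsCritical G) (hχ : G.chromaticNumber = ((k+1 : ℕ) : ℕ∞)) : Good G k := by
  classical
  have h1 : G.Colorable (k+1) := chromaticNumber_le_iff_colorable.mp (le_of_eq hχ)
  have h2 : ¬ G.Colorable k := by
    intro h
    have := chromaticNumber_le_iff_colorable.mpr h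
    rw [hχ] at this
    exact absurd (Nat.cast_le.mp this) (by omega)
  have hsub : ∀ H : G.Subgraph, H ≠ ⊤ → H.coe.Colorable k := by
    intro H hne
    have := hc H hne
    rw [hχ] at this
    apply chromaticNumber_le_iff_colorable.mp
    rw [Nat.cast_add, Nat.cast_one] at this
    exact (ENat.lt_add_one_iff (by simp)).mp this
  refine ⟨h1, h2, ?_, ?_⟩
  · intro v
    by_contra hcon
    push_neg at hcon
    set H : G.Subgraph := (⊤ : G.Subgraph).deleteVerts {v} with hH
    have hne : H ≠ ⊤ := by
      intro h
      have hv : v ∈ H.verts := by rw [h, Subgraph.verts_top]; trivial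
      rw [hH] at hv
      simp [Subgraph.deleteVerts_verts] at hv
    obtain ⟨C⟩ := hsub H hne
    apply h2
    refine ⟨Coloring.mk (fun x => if hx : x = v then ⟨0, by omega⟩
      else C ⟨x, by simp [hH, Subgraph.deleteVerts_verts, hx]⟩) ?_⟩
    intro a b hab
    have ha : a ≠ v := fun h => hcon b (h ▸ hab)
    have hb : b ≠ v := fun h => hcon a (h ▸ hab.symm)
    simp only [dif_neg ha, dif_neg hb]
    apply C.valid
    show H.Adj a b
    rw [hH]
    simp [Subgraph.deleteVerts_adj, ha, hb, hab]
  · intro x y hxy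
    set K : G.Subgraph := SimpleGraph.toSubgraph (G.deleteEdges {s(x,y)}) (G.deleteEdges_le _) with hK
    have hne : K ≠ ⊤ := by
      intro h
      have : K.Adj x y ↔ (⊤ : G.Subgraph).Adj x y := by rw [h]
      rw [Subgraph.top_adj, hK] at this
      simp only [toSubgraph_adj, SimpleGraph.deleteEdges_adj] at this
      simp [hxy] at this
    obtain ⟨C⟩ := hsub K hne
    refine ⟨Coloring.mk (fun z => C ⟨z, by simp [hK]⟩) ?_⟩
    intro a b hab
    exact C.valid hab

lemma crit_of_good {W : Type} {G : SimpleGraph W} {k : ℕ} (hk : 3 ≤ k) (hg : Good G k) :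
    IsCritical G ∧ G.chromaticNumber = ((k+1 : ℕ) : ℕ∞) := by
  obtain ⟨h1, h2, h3, h4⟩ := hg
  have hχ := chrom_eq h1 h2
  refine ⟨?_, hχ⟩
  intro H hne
  have key : ∃ x y, G.Adj x y ∧ ¬ H.Adj x y := by
    by_contra hcon
    push_neg at hcon
    apply hne
    ext v w
    · simp only [Subgraph.verts_top, Set.mem_univ, iff_true]
      obtain ⟨u, hu⟩ := h3 v
      exact (hcon v u hu).fst_mem
    · rw [Subgraph.top_adj]
      exact ⟨fun h => h.adj_sub, fun h => hcon v w h⟩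
  obtain ⟨x, y, hxy, hnadj⟩ := key
  obtain ⟨C⟩ := h4 x y hxy
  have hcol : H.coe.Colorable k := by
    refine ⟨Coloring.mk (fun a => C a.1) ?_⟩
    intro a b hab
    refine del_valid C (Subgraph.adj_sub H hab) ?_
    intro h
    rw [Sym2.eq_iff] at h
    rcases h with ⟨h1', h2'⟩ | ⟨h1', h2'⟩
    · exact hnadj (by rw [← h1', ← h2']; exact hab)
    · exact hnadj (by rw [← h2', ← h1']; exact hab.symm)
  calc H.coe.chromaticNumber ≤ (k : ℕ∞) := chromaticNumber_le_iff_colorable.mpr hcol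
    _ < ((k+1 : ℕ) : ℕ∞) := by
        rw [Nat.cast_add, Nat.cast_one]
        exact (ENat.lt_add_one_iff (by simp)).mpr le_rfl
    _ = G.chromaticNumber := hχ.symm

lemma crit_iff_good {W : Type} {G : SimpleGraph W} {k : ℕ} (hk : 3 ≤ k) :
    (IsCritical G ∧ G.chromaticNumber = ((k+1 : ℕ) : ℕ∞)) ↔ Good G k :=
  ⟨fun h => good_of_crit hk h.1 h.2, fun h => crit_of_good hk h⟩

lemma good_of_iso {W W' : Type} {G : SimpleGraph W} {G' : SimpleGraph W'} (e : G ≃g G')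
    {k : ℕ} (hg : Good G k) : Good G' k := by
  obtain ⟨h1, h2, h3, h4⟩ := hg
  refine ⟨colorable_of_hom e.symm.toEmbedding.toHom h1, ?_, ?_, ?_⟩
  · intro h
    exact h2 (colorable_of_hom e.toEmbedding.toHom h)
  · intro v
    obtain ⟨u, hu⟩ := h3 (e.symm v)
    refine ⟨e u, ?_⟩
    have := e.map_adj_iff.mpr hu
    rwa [e.apply_symm_apply] at this
  · intro x y hxy
    have hxy' : G.Adj (e.symm x) (e.symm y) := by
      rw [← e.map_adj_iff, e.apply_symm_apply, e.apply_symm_apply]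
      exact hxy
    obtain ⟨C⟩ := h4 _ _ hxy'
    refine ⟨Coloring.mk (fun z => C (e.symm z)) ?_⟩
    intro a b hab
    rw [SimpleGraph.deleteEdges_adj] at hab
    obtain ⟨hab, hE⟩ := hab
    refine del_valid C (by rw [← e.map_adj_iff, e.apply_symm_apply, e.apply_symm_apply]; exact hab) ?_
    intro h
    rw [Sym2.eq_iff] at h
    apply hE
    rcases h with ⟨ha, hb⟩ | ⟨ha, hb⟩
    · have : a = x := by rw [← e.apply_symm_apply a, ha, e.apply_symm_apply]
      have hb' : b = y := by rw [← e.apply_symm_apply b, hb, e.apply_symm_apply]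
      simp [this, hb']
    · have : a = y := by rw [← e.apply_symm_apply a, ha, e.apply_symm_apply]
      have hb' : b = x := by rw [← e.apply_symm_apply b, hb, e.apply_symm_apply]
      simp [this, hb', Sym2.eq_swap]

lemma good_iff_of_iso {W W' : Type} {G : SimpleGraph W} {G' : SimpleGraph W'} (e : G ≃g G')
    {k : ℕ} : Good G k ↔ Good G' k :=
  ⟨good_of_iso e, good_of_iso e.symm⟩

lemma exists_adj_ne {W : Type} {G : SimpleGraph W} {k : ℕ} (hk : 3 ≤ k) (hg : Good G k)
    {v u : W} (h : G.Adj v u) : ∃ u', u' ≠ u ∧ G.Adj v u' := by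
  classical
  by_contra hcon
  push_neg at hcon
  obtain ⟨C⟩ := hg.2.2.2 v u h
  obtain ⟨t, ht, -⟩ := third_color hk (C u) (C u)
  apply hg.2.1
  refine ⟨Coloring.mk (fun x => if x = v then t else C x) ?_⟩
  intro a b hab
  by_cases ha : a = v <;> by_cases hb : b = v
  · exact absurd (ha.trans hb.symm) hab.ne
  · subst ha
    have hbu : b = u := by
      by_contra hbu
      exact hcon b hbu hab
    subst hbu
    simp only [if_pos rfl, if_neg hb]
    exact ht
  · subst hb
    have hau : a = u := by
      by_contra hau
      exact hcon a hau hab.symm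
    subst hau
    simp only [if_neg ha, if_pos rfl]
    exact ht.symm
  · simp only [if_neg ha, if_neg hb]
    refine del_valid C hab ?_
    intro hh
    rw [Sym2.eq_iff] at hh
    rcases hh with ⟨h', -⟩ | ⟨-, h'⟩
    · exact ha h'
    · exact hb h'

section Join

variable {V₁ V₂ : Type} {G₁ : SimpleGraph V₁} {G₂ : SimpleGraph V₂} {v₁ w₁ : V₁} {v₂ w₂ : V₂}

/-- The copy of a `V₁`-vertex in the Hajós join. -/
def ii1 (v₂ : V₂) (x : V₁) : {x : V₁ ⊕ V₂ // x ≠ Sum.inr v₂} := ⟨Sum.inl x, by simp⟩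

/-- The copy of a `V₂`-vertex (other than `v₂`) in the Hajós join. -/
def ii2 (y : V₂) (hy : y ≠ v₂) : {x : V₁ ⊕ V₂ // x ≠ Sum.inr v₂} :=
  ⟨Sum.inr y, by simp [hy]⟩

lemma ii1_inj {x y : V₁} : ii1 (V₂ := V₂) v₂ x = ii1 v₂ y ↔ x = y := by
  simp [ii1, Subtype.ext_iff]

lemma ii2_inj {x y : V₂} {hx : x ≠ v₂} {hy : y ≠ v₂} :
    ii2 (V₁ := V₁) x hx = ii2 y hy ↔ x = y := by
  simp [ii2, Subtype.ext_iff]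

lemma ii1_ne_ii2 {x : V₁} {y : V₂} {hy : y ≠ v₂} : ii1 v₂ x ≠ ii2 y hy := by
  simp [ii1, ii2, Subtype.ext_iff]

lemma sne_11_mix {x y a : V₁} {b : V₂} {hb : b ≠ v₂} :
    s(ii1 v₂ x, ii1 v₂ y) ≠ s(ii1 v₂ a, ii2 b hb) := by
  intro h
  rw [Sym2.eq_iff] at h
  rcases h with ⟨-, h⟩ | ⟨h, -⟩ <;> exact ii1_ne_ii2 h

lemma sne_22_mix {x y : V₂} {hx : x ≠ v₂} {hy : y ≠ v₂} {a : V₁} {b : V₂} {hb : b ≠ v₂} :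
    s(ii2 (V₁ := V₁) x hx, ii2 y hy) ≠ s(ii1 v₂ a, ii2 b hb) := by
  intro h
  rw [Sym2.eq_iff] at h
  rcases h with ⟨h, -⟩ | ⟨-, h⟩ <;> exact ii1_ne_ii2 h.symm

lemma sne_11_22 {x y : V₁} {a b : V₂} {ha : a ≠ v₂} {hb : b ≠ v₂} :
    s(ii1 v₂ x, ii1 v₂ y) ≠ s(ii2 a ha, ii2 b hb) := by
  intro h
  rw [Sym2.eq_iff] at h
  rcases h with ⟨h, -⟩ | ⟨h, -⟩ <;> exact ii1_ne_ii2 h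

lemma s11_eq_iff {x y a b : V₁} :
    s(ii1 (V₂ := V₂) v₂ x, ii1 v₂ y) = s(ii1 v₂ a, ii1 v₂ b) ↔ s(x,y) = s(a,b) := by
  rw [Sym2.eq_iff, Sym2.eq_iff]
  simp [ii1_inj]

lemma s22_eq_iff {x y a b : V₂} {hx : x ≠ v₂} {hy : y ≠ v₂} {ha : a ≠ v₂} {hb : b ≠ v₂} :
    s(ii2 (V₁ := V₁) x hx, ii2 y hy) = s(ii2 a ha, ii2 b hb) ↔ s(x,y) = s(a,b) := by
  rw [Sym2.eq_iff, Sym2.eq_iff]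
  simp [ii2_inj]

lemma mix_eq_iff {a c : V₁} {b d : V₂} {hb : b ≠ v₂} {hd : d ≠ v₂} :
    s(ii1 v₂ a, ii2 b hb) = s(ii1 v₂ c, ii2 d hd) ↔ a = c ∧ b = d := by
  constructor
  · intro hh
    rcases Sym2.eq_iff.mp hh with ⟨h', h''⟩ | ⟨h', h''⟩
    · exact ⟨ii1_inj.mp h', ii2_inj.mp h''⟩
    · exact absurd h' ii1_ne_ii2
  · rintro ⟨rfl, rfl⟩
    rfl

/-- The defining relation of the Hajós join. -/
abbrev HRel (G₁ : SimpleGraph V₁) (G₂ : SimpleGraph V₂) (v₁ w₁ : V₁) (v₂ w₂ : V₂)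
    (a b : {x : V₁ ⊕ V₂ // x ≠ Sum.inr v₂}) : Prop :=
  (∃ x y : V₁, a.1 = Sum.inl x ∧ b.1 = Sum.inl y ∧ G₁.Adj x y ∧
      ¬(x = v₁ ∧ y = w₁) ∧ ¬(x = w₁ ∧ y = v₁)) ∨
  (∃ x y : V₂, a.1 = Sum.inr x ∧ b.1 = Sum.inr y ∧ G₂.Adj x y) ∨
  (∃ y : V₂, a.1 = Sum.inl v₁ ∧ b.1 = Sum.inr y ∧ G₂.Adj v₂ y ∧ y ≠ w₂) ∨
  (a.1 = Sum.inl w₁ ∧ b.1 = Sum.inr w₂)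

lemma hajos_adj {a b : {x : V₁ ⊕ V₂ // x ≠ Sum.inr v₂}} :
    (hajosJoin G₁ G₂ v₁ w₁ v₂ w₂).Adj a b ↔
      a ≠ b ∧ (HRel G₁ G₂ v₁ w₁ v₂ w₂ a b ∨ HRel G₁ G₂ v₁ w₁ v₂ w₂ b a) := by
  rw [hajosJoin, fromRel_adj]

lemma adj1 {x y : V₁} (h : G₁.Adj x y) (h1 : ¬(x = v₁ ∧ y = w₁)) (h2 : ¬(x = w₁ ∧ y = v₁)) :
    (hajosJoin G₁ G₂ v₁ w₁ v₂ w₂).Adj (ii1 v₂ x) (ii1 v₂ y) := by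
  rw [hajos_adj]
  exact ⟨by simp [ii1, Subtype.ext_iff, h.ne], Or.inl (Or.inl ⟨x, y, rfl, rfl, h, h1, h2⟩)⟩

lemma adj2 {x y : V₂} (hx : x ≠ v₂) (hy : y ≠ v₂) (h : G₂.Adj x y) :
    (hajosJoin G₁ G₂ v₁ w₁ v₂ w₂).Adj (ii2 x hx) (ii2 y hy) := by
  rw [hajos_adj]
  exact ⟨by simp [ii2, Subtype.ext_iff, h.ne], Or.inl (Or.inr (Or.inl ⟨x, y, rfl, rfl, h⟩))⟩

lemma adj3 {y : V₂} (h : G₂.Adj v₂ y) (hy : y ≠ w₂) :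
    (hajosJoin G₁ G₂ v₁ w₁ v₂ w₂).Adj (ii1 v₂ v₁) (ii2 y h.ne') := by
  rw [hajos_adj]
  exact ⟨by simp [ii1, ii2, Subtype.ext_iff],
    Or.inl (Or.inr (Or.inr (Or.inl ⟨y, rfl, rfl, h, hy⟩)))⟩

lemma adj4 (h2 : G₂.Adj v₂ w₂) :
    (hajosJoin G₁ G₂ v₁ w₁ v₂ w₂).Adj (ii1 v₂ w₁) (ii2 w₂ h2.ne') := by
  rw [hajos_adj]
  exact ⟨by simp [ii1, ii2, Subtype.ext_iff],
    Or.inl (Or.inr (Or.inr (Or.inr ⟨rfl, rfl⟩)))⟩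

/-- Master lemma: gluing colorings of the two sides into a coloring of (an
edge-deleted) Hajós join. -/
lemma master (h2 : G₂.Adj v₂ w₂) {k : ℕ}
    (E : Set (Sym2 {x : V₁ ⊕ V₂ // x ≠ Sum.inr v₂})) (c₁ : V₁ → Fin k) (c₂ : V₂ → Fin k)
    (H1 : ∀ x y, G₁.Adj x y → ¬(x = v₁ ∧ y = w₁) → ¬(x = w₁ ∧ y = v₁) →
        s(ii1 v₂ x, ii1 v₂ y) ∉ E → c₁ x ≠ c₁ y)
    (H2 : ∀ (x y : V₂) (hx : x ≠ v₂) (hy : y ≠ v₂), G₂.Adj x y →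
        s(ii2 (V₁ := V₁) x hx, ii2 y hy) ∉ E → c₂ x ≠ c₂ y)
    (H3 : ∀ (y : V₂) (hy : y ≠ v₂), G₂.Adj v₂ y → y ≠ w₂ →
        s(ii1 v₂ v₁, ii2 y hy) ∉ E → c₁ v₁ ≠ c₂ y)
    (H4 : s(ii1 v₂ w₁, ii2 w₂ h2.ne') ∉ E → c₁ w₁ ≠ c₂ w₂) :
    ((hajosJoin G₁ G₂ v₁ w₁ v₂ w₂).deleteEdges E).Colorable k := by
  have key : ∀ a b, HRel G₁ G₂ v₁ w₁ v₂ w₂ a b → s(a,b) ∉ E →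
      Sum.elim c₁ c₂ a.1 ≠ Sum.elim c₁ c₂ b.1 := by
    intro a b h hE
    rcases h with ⟨x, y, hax, hby, h3, h4, h5⟩ | ⟨x, y, hax, hby, h3⟩ |
      ⟨y, hax, hby, h3, h4⟩ | ⟨hax, hby⟩
    · have ha : a = ii1 v₂ x := Subtype.ext hax
      have hb : b = ii1 v₂ y := Subtype.ext hby
      subst ha hb
      simpa [ii1] using H1 x y h3 h4 h5 hE
    · have hx : x ≠ v₂ := fun h => a.2 (by rw [hax, h])
      have hy : y ≠ v₂ := fun h => b.2 (by rw [hby, h])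
      have ha : a = ii2 x hx := Subtype.ext hax
      have hb : b = ii2 y hy := Subtype.ext hby
      subst ha hb
      simpa [ii2] using H2 x y hx hy h3 hE
    · have hy : y ≠ v₂ := fun h => b.2 (by rw [hby, h])
      have ha : a = ii1 v₂ v₁ := Subtype.ext hax
      have hb : b = ii2 y hy := Subtype.ext hby
      subst ha hb
      simpa [ii1, ii2] using H3 y hy h3 h4 hE
    · have ha : a = ii1 v₂ w₁ := Subtype.ext hax
      have hb : b = ii2 w₂ h2.ne' := Subtype.ext hby
      subst ha hb
      simpa [ii1, ii2] using H4 hE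
  refine ⟨Coloring.mk (fun a => Sum.elim c₁ c₂ a.1) ?_⟩
  intro a b hab
  rw [SimpleGraph.deleteEdges_adj] at hab
  obtain ⟨hab, hE⟩ := hab
  rw [hajos_adj] at hab
  obtain ⟨hne, h | h⟩ := hab
  · exact key a b h hE
  · exact (key b a h (by rwa [Sym2.eq_swap] at hE)).symm

lemma good_join_del {k : ℕ} (h1 : G₁.Adj v₁ w₁) (h2 : G₂.Adj v₂ w₂)
    (hg1 : Good G₁ k) (hg2 : Good G₂ k) :
    ∀ a b, HRel G₁ G₂ v₁ w₁ v₂ w₂ a b →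
      ((hajosJoin G₁ G₂ v₁ w₁ v₂ w₂).deleteEdges {s(a,b)}).Colorable k := by
  classical
  intro a b h
  rcases h with ⟨x₀, y₀, hax, hby, hxy, hn1, hn2⟩ | ⟨x₀, y₀, hax, hby, hxy⟩ |
    ⟨y₀, hax, hby, hvy, hyw⟩ | ⟨hax, hby⟩
  · -- edge inside G₁
    have ha : a = ii1 v₂ x₀ := Subtype.ext hax
    have hb : b = ii1 v₂ y₀ := Subtype.ext hby
    subst ha hb
    obtain ⟨C₁⟩ := hg1.2.2.2 x₀ y₀ hxy
    obtain ⟨C₂⟩ := hg2.2.2.2 v₂ w₂ h2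
    set c₂ : V₂ → Fin k := fun y => Equiv.swap (C₂ v₂) (C₁ v₁) (C₂ y) with hc₂def
    have hc₂ : ∀ x y, G₂.Adj x y → s(x,y) ≠ s(v₂,w₂) → c₂ x ≠ c₂ y :=
      fun x y hxy' hne h => del_valid C₂ hxy' hne ((Equiv.swap _ _).injective h)
    have halign : c₂ v₂ = C₁ v₁ := Equiv.swap_apply_left _ _
    have hforced : c₂ v₂ = c₂ w₂ := forced h2 hg2.2.1 c₂ hc₂
    have hvw : s(v₁, w₁) ≠ s(x₀, y₀) := by
      intro h
      rw [Sym2.eq_iff] at h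
      rcases h with ⟨h', h''⟩ | ⟨h', h''⟩
      · exact hn1 ⟨h'.symm, h''.symm⟩
      · exact hn2 ⟨h''.symm, h'.symm⟩
    refine master h2 _ (⇑C₁) c₂ ?_ ?_ ?_ ?_
    · intro x y hxy' hn1' hn2' hE
      refine del_valid C₁ hxy' ?_
      intro h
      apply hE
      rw [Sym2.eq_iff] at h
      rcases h with ⟨rfl, rfl⟩ | ⟨rfl, rfl⟩
      · rfl
      · exact Sym2.eq_swap
    · intro x y hx hy hxy' hE
      refine hc₂ x y hxy' ?_
      intro h
      rw [Sym2.eq_iff] at h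
      rcases h with ⟨h', h''⟩ | ⟨h', h''⟩
      · exact hx h'
      · exact hy h''
    · intro y hy hvy' hyw' hE
      rw [← halign]
      refine hc₂ v₂ y hvy' ?_
      intro h
      rw [Sym2.eq_iff] at h
      rcases h with ⟨h', h''⟩ | ⟨h', h''⟩
      · exact hyw' h''
      · exact h2.ne h'
    · intro _ hh
      exact del_valid C₁ h1 hvw (halign.symm.trans (hforced.trans hh.symm))
  · -- edge inside G₂ avoiding v₂
    have hx₀ : x₀ ≠ v₂ := fun h => a.2 (by rw [hax, h])
    have hy₀ : y₀ ≠ v₂ := fun h => b.2 (by rw [hby, h])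
    have ha : a = ii2 x₀ hx₀ := Subtype.ext hax
    have hb : b = ii2 y₀ hy₀ := Subtype.ext hby
    subst ha hb
    obtain ⟨C₂⟩ := hg2.2.2.2 x₀ y₀ hxy
    obtain ⟨C₁⟩ := hg1.2.2.2 v₁ w₁ h1
    set c₁ : V₁ → Fin k := fun x => Equiv.swap (C₁ v₁) (C₂ v₂) (C₁ x) with hc₁def
    have hc₁ : ∀ x y, G₁.Adj x y → s(x,y) ≠ s(v₁,w₁) → c₁ x ≠ c₁ y :=
      fun x y hxy' hne h => del_valid C₁ hxy' hne ((Equiv.swap _ _).injective h)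
    have halign : c₁ v₁ = C₂ v₂ := Equiv.swap_apply_left _ _
    have hforced : c₁ v₁ = c₁ w₁ := forced h1 hg1.2.1 c₁ hc₁
    refine master h2 _ c₁ (⇑C₂) ?_ ?_ ?_ ?_
    · intro x y hxy' hn1' hn2' hE
      refine hc₁ x y hxy' ?_
      intro h
      rw [Sym2.eq_iff] at h
      rcases h with ⟨h', h''⟩ | ⟨h', h''⟩
      · exact hn1' ⟨h', h''⟩
      · exact hn2' ⟨h', h''⟩
    · intro x y hx hy hxy' hE
      refine del_valid C₂ hxy' ?_
      intro h
      apply hE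
      rw [Sym2.eq_iff] at h
      rcases h with ⟨rfl, rfl⟩ | ⟨rfl, rfl⟩
      · rfl
      · exact Sym2.eq_swap
    · intro y hy hvy' hyw' hE
      rw [halign]
      refine del_valid C₂ hvy' ?_
      intro h
      rw [Sym2.eq_iff] at h
      rcases h with ⟨h', h''⟩ | ⟨h', h''⟩
      · exact hx₀ h'.symm
      · exact hy₀ h'.symm
    · intro _ hh
      have hvw : s(v₂, w₂) ≠ s(x₀, y₀) := by
        intro h
        rw [Sym2.eq_iff] at h
        rcases h with ⟨h', h''⟩ | ⟨h', h''⟩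
        · exact hx₀ h'.symm
        · exact hy₀ h'.symm
      exact del_valid C₂ h2 hvw (halign.symm.trans (hforced.trans hh))
  · -- edge from `v` to the G₂ side
    have hy₀ : y₀ ≠ v₂ := fun h => b.2 (by rw [hby, h])
    have ha : a = ii1 v₂ v₁ := Subtype.ext hax
    have hb : b = ii2 y₀ hy₀ := Subtype.ext hby
    subst ha hb
    obtain ⟨C₂⟩ := hg2.2.2.2 v₂ y₀ hvy
    obtain ⟨C₁⟩ := hg1.2.2.2 v₁ w₁ h1
    set c₁ : V₁ → Fin k := fun x => Equiv.swap (C₁ v₁) (C₂ v₂) (C₁ x) with hc₁def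
    have hc₁ : ∀ x y, G₁.Adj x y → s(x,y) ≠ s(v₁,w₁) → c₁ x ≠ c₁ y :=
      fun x y hxy' hne h => del_valid C₁ hxy' hne ((Equiv.swap _ _).injective h)
    have halign : c₁ v₁ = C₂ v₂ := Equiv.swap_apply_left _ _
    have hforced : c₁ v₁ = c₁ w₁ := forced h1 hg1.2.1 c₁ hc₁
    refine master h2 _ c₁ (⇑C₂) ?_ ?_ ?_ ?_
    · intro x y hxy' hn1' hn2' hE
      refine hc₁ x y hxy' ?_
      intro h
      rw [Sym2.eq_iff] at h
      rcases h with ⟨h', h''⟩ | ⟨h', h''⟩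
      · exact hn1' ⟨h', h''⟩
      · exact hn2' ⟨h', h''⟩
    · intro x y hx hy hxy' hE
      refine del_valid C₂ hxy' ?_
      intro h
      rw [Sym2.eq_iff] at h
      rcases h with ⟨h', h''⟩ | ⟨h', h''⟩
      · exact hx h'
      · exact hy h''
    · intro y hy hvy' hyw' hE
      rw [halign]
      have hyne : y ≠ y₀ := by
        rintro rfl
        exact hE rfl
      refine del_valid C₂ hvy' ?_
      intro h
      rw [Sym2.eq_iff] at h
      rcases h with ⟨h', h''⟩ | ⟨h', h''⟩
      · exact hyne h''
      · exact hy h''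
    · intro _ hh
      have hvw : s(v₂, w₂) ≠ s(v₂, y₀) := by
        intro h
        rw [Sym2.eq_iff] at h
        rcases h with ⟨h', h''⟩ | ⟨h', h''⟩
        · exact hyw h''.symm
        · exact hvy.ne' h'.symm
      exact del_valid C₂ h2 hvw (halign.symm.trans (hforced.trans hh))
  · -- the special edge w₁w₂
    have ha : a = ii1 v₂ w₁ := Subtype.ext hax
    have hb : b = ii2 w₂ h2.ne' := Subtype.ext hby
    subst ha hb
    obtain ⟨C₁⟩ := hg1.2.2.2 v₁ w₁ h1
    obtain ⟨C₂⟩ := hg2.2.2.2 v₂ w₂ h2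
    set c₂ : V₂ → Fin k := fun y => Equiv.swap (C₂ v₂) (C₁ v₁) (C₂ y) with hc₂def
    have hc₂ : ∀ x y, G₂.Adj x y → s(x,y) ≠ s(v₂,w₂) → c₂ x ≠ c₂ y :=
      fun x y hxy' hne h => del_valid C₂ hxy' hne ((Equiv.swap _ _).injective h)
    have halign : c₂ v₂ = C₁ v₁ := Equiv.swap_apply_left _ _
    refine master h2 _ (⇑C₁) c₂ ?_ ?_ ?_ ?_
    · intro x y hxy' hn1' hn2' hE
      refine del_valid C₁ hxy' ?_
      intro h
      rw [Sym2.eq_iff] at h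
      rcases h with ⟨h', h''⟩ | ⟨h', h''⟩
      · exact hn1' ⟨h', h''⟩
      · exact hn2' ⟨h', h''⟩
    · intro x y hx hy hxy' hE
      refine hc₂ x y hxy' ?_
      intro h
      rw [Sym2.eq_iff] at h
      rcases h with ⟨h', h''⟩ | ⟨h', h''⟩
      · exact hx h'
      · exact hy h''
    · intro y hy hvy' hyw' hE
      rw [← halign]
      refine hc₂ v₂ y hvy' ?_
      intro h
      rw [Sym2.eq_iff] at h
      rcases h with ⟨h', h''⟩ | ⟨h', h''⟩
      · exact hyw' h''
      · exact h2.ne h'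
    · intro hE
      exact absurd rfl hE

lemma good_join {k : ℕ} (hk : 3 ≤ k) (h1 : G₁.Adj v₁ w₁) (h2 : G₂.Adj v₂ w₂)
    (hg1 : Good G₁ k) (hg2 : Good G₂ k) : Good (hajosJoin G₁ G₂ v₁ w₁ v₂ w₂) k := by
  classical
  have hdel := good_join_del h1 h2 hg1 hg2
  refine ⟨?_, ?_, ?_, ?_⟩
  · exact colorable_succ (hdel (ii1 v₂ w₁) (ii2 w₂ h2.ne')
      (Or.inr (Or.inr (Or.inr ⟨rfl, rfl⟩))))
  · rintro ⟨C⟩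
    have hc₁ : ∀ x y, G₁.Adj x y → s(x,y) ≠ s(v₁,w₁) →
        C (ii1 v₂ x) ≠ C (ii1 v₂ y) := by
      intro x y hxy hne
      have hn1 : ¬(x = v₁ ∧ y = w₁) := by rintro ⟨rfl, rfl⟩; exact hne rfl
      have hn2 : ¬(x = w₁ ∧ y = v₁) := by rintro ⟨rfl, rfl⟩; exact hne Sym2.eq_swap
      exact C.valid (adj1 hxy hn1 hn2)
    have hv1 : C (ii1 v₂ v₁) = C (ii1 v₂ w₁) :=
      forced h1 hg1.2.1 (fun x => C (ii1 v₂ x)) hc₁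
    set c₂ : V₂ → Fin k := fun y => if hy : y = v₂ then C (ii1 v₂ v₁) else C (ii2 y hy)
      with hc₂def
    have ev : c₂ v₂ = C (ii1 v₂ v₁) := dif_pos rfl
    have eY : ∀ (y) (hy : y ≠ v₂), c₂ y = C (ii2 y hy) := fun y hy => dif_neg hy
    have hc₂ : ∀ x y, G₂.Adj x y → s(x,y) ≠ s(v₂,w₂) → c₂ x ≠ c₂ y := by
      intro x y hxy hne
      by_cases hx : x = v₂ <;> by_cases hy : y = v₂
      · exact absurd (hx.trans hy.symm) hxy.ne
      · subst hx
        have hyw : y ≠ w₂ := by rintro rfl; exact hne rfl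
        rw [ev, eY y hy]
        exact C.valid (adj3 hxy hyw)
      · subst hy
        have hxw : x ≠ w₂ := by rintro rfl; exact hne Sym2.eq_swap
        rw [ev, eY x hx]
        exact (C.valid (adj3 hxy.symm hxw)).symm
      · rw [eY x hx, eY y hy]
        exact C.valid (adj2 hx hy hxy)
    have hv2 : c₂ v₂ = c₂ w₂ := forced h2 hg2.2.1 c₂ hc₂
    apply C.valid (adj4 (G₁ := G₁) (v₁ := v₁) (w₁ := w₁) h2)
    rw [← hv1, ← ev, hv2, eY w₂ h2.ne']
  · rintro ⟨x | y, hne0⟩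
    · by_cases hx1 : x = w₁
      · subst hx1
        exact ⟨ii2 w₂ h2.ne', adj4 h2⟩
      by_cases hx2 : x = v₁
      · subst hx2
        obtain ⟨u', hu1, hu2⟩ := exists_adj_ne hk hg1 h1
        refine ⟨ii1 v₂ u', adj1 hu2 ?_ ?_⟩
        · rintro ⟨-, h⟩; exact hu1 h
        · rintro ⟨h, -⟩; exact h1.ne h
      · obtain ⟨u, hu⟩ := hg1.2.2.1 x
        refine ⟨ii1 v₂ u, adj1 hu ?_ ?_⟩
        · rintro ⟨h, -⟩; exact hx2 h
        · rintro ⟨h, -⟩; exact hx1 h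
    · have hy : y ≠ v₂ := by simpa using hne0
      by_cases hyw : y = w₂
      · subst hyw
        exact ⟨ii1 v₂ w₁, (adj4 h2).symm⟩
      · obtain ⟨u, hu⟩ := hg2.2.2.1 y
        by_cases huv : u = v₂
        · have hu' : G₂.Adj v₂ y := by rw [← huv]; exact hu.symm
          exact ⟨ii1 v₂ v₁, (adj3 hu' hyw).symm⟩
        · exact ⟨ii2 u huv, adj2 hy huv hu⟩
  · intro a b hab
    rw [hajos_adj] at hab
    obtain ⟨hne, h | h⟩ := hab
    · exact hdel a b h
    · rw [Sym2.eq_swap]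
      exact hdel b a h

open Classical in
/-- Extension of a coloring of the join to the second factor, recoloring `v₂`
with the color of the identified vertex. -/
noncomputable def extC (v₁ : V₁) {k : ℕ}
    (c : {x : V₁ ⊕ V₂ // x ≠ Sum.inr v₂} → Fin k) : V₂ → Fin k :=
  fun y => if hy : y = v₂ then c (ii1 v₂ v₁) else c (ii2 y hy)

lemma extC_v2 {k : ℕ} (c : {x : V₁ ⊕ V₂ // x ≠ Sum.inr v₂} → Fin k) :
    extC v₁ c v₂ = c (ii1 v₂ v₁) := dif_pos rfl

lemma extC_ne {k : ℕ} (c : {x : V₁ ⊕ V₂ // x ≠ Sum.inr v₂} → Fin k)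
    {y : V₂} (hy : y ≠ v₂) : extC v₁ c y = c (ii2 y hy) := dif_neg hy

lemma restr1_valid {k : ℕ} {F : Sym2 {x : V₁ ⊕ V₂ // x ≠ Sum.inr v₂}}
    (C : ((hajosJoin G₁ G₂ v₁ w₁ v₂ w₂).deleteEdges {F}).Coloring (Fin k)) {f : Sym2 V₁}
    (hinl : ∀ x y : V₁, s(ii1 v₂ x, ii1 v₂ y) = F → s(x,y) = f) :
    ∀ x y, G₁.Adj x y → s(x,y) ≠ s(v₁,w₁) → s(x,y) ≠ f →
      C (ii1 v₂ x) ≠ C (ii1 v₂ y) := by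
  intro x y hxy hne hnf
  have hn1 : ¬(x = v₁ ∧ y = w₁) := by rintro ⟨rfl, rfl⟩; exact hne rfl
  have hn2 : ¬(x = w₁ ∧ y = v₁) := by rintro ⟨rfl, rfl⟩; exact hne Sym2.eq_swap
  exact del_valid C (adj1 hxy hn1 hn2) (fun hh => hnf (hinl x y hh))

lemma ext2_valid {k : ℕ} {F : Sym2 {x : V₁ ⊕ V₂ // x ≠ Sum.inr v₂}} {f : Sym2 V₂}
    (h2 : G₂.Adj v₂ w₂)
    (C : ((hajosJoin G₁ G₂ v₁ w₁ v₂ w₂).deleteEdges {F}).Coloring (Fin k))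
    (hmix : ∀ (y : V₂) (hy : y ≠ v₂), s(ii1 v₂ v₁, ii2 y hy) = F → s(v₂, y) = f)
    (hinr : ∀ (x y : V₂) (hx : x ≠ v₂) (hy : y ≠ v₂),
      s(ii2 (V₁ := V₁) x hx, ii2 y hy) = F → s(x, y) = f) :
    ∀ x y, G₂.Adj x y → s(x,y) ≠ s(v₂,w₂) → s(x,y) ≠ f →
      extC v₁ (⇑C) x ≠ extC v₁ (⇑C) y := by
  intro x y hxy hne hnf
  by_cases hx : x = v₂ <;> by_cases hy : y = v₂
  · exact absurd (hx.trans hy.symm) hxy.ne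
  · subst hx
    have hyw : y ≠ w₂ := by rintro rfl; exact hne rfl
    rw [extC_v2, extC_ne _ hy]
    exact del_valid C (adj3 hxy hyw) (fun hh => hnf (hmix y hy hh))
  · subst hy
    have hxw : x ≠ w₂ := by rintro rfl; exact hne Sym2.eq_swap
    rw [extC_v2, extC_ne _ hx]
    refine (del_valid C (adj3 hxy.symm hxw) ?_).symm
    intro hh
    exact hnf (Sym2.eq_swap.trans (hmix x hx hh))
  · rw [extC_ne _ hx, extC_ne _ hy]
    exact del_valid C (adj2 hx hy hxy) (fun hh => hnf (hinr x y hx hy hh))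

lemma join_good {k : ℕ} (hk : 3 ≤ k) (h1 : G₁.Adj v₁ w₁) (h2 : G₂.Adj v₂ w₂)
    (hgJ : Good (hajosJoin G₁ G₂ v₁ w₁ v₂ w₂) k) : Good G₁ k ∧ Good G₂ k := by
  classical
  obtain ⟨hJ1, hJ2, hJ3, hJ4⟩ := hgJ
  -- G₁ - e₁ is k-colorable
  have s1 : (G₁.deleteEdges {s(v₁,w₁)}).Colorable k := by
    obtain ⟨C⟩ := hJ4 _ _ (adj4 (G₁ := G₁) (v₁ := v₁) (w₁ := w₁) h2)
    refine ⟨Coloring.mk (fun x => C (ii1 v₂ x)) ?_⟩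
    intro a b hab
    rw [SimpleGraph.deleteEdges_adj] at hab
    obtain ⟨hab, hne⟩ := hab
    exact restr1_valid C (f := s(v₁,w₁)) (fun x y hh => absurd hh sne_11_mix) a b hab
      (by simpa using hne) (by simpa using hne)
  -- G₂ - e₂ is k-colorable
  have s2 : (G₂.deleteEdges {s(v₂,w₂)}).Colorable k := by
    obtain ⟨C⟩ := hJ4 _ _ (adj4 (G₁ := G₁) (v₁ := v₁) (w₁ := w₁) h2)
    refine ⟨Coloring.mk (extC v₁ (⇑C)) ?_⟩
    intro a b hab
    rw [SimpleGraph.deleteEdges_adj] at hab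
    obtain ⟨hab, hne⟩ := hab
    refine ext2_valid h2 C (f := s(v₂,w₂)) ?_ ?_ a b hab (by simpa using hne)
      (by simpa using hne)
    · intro y hy hh
      exfalso
      rcases Sym2.eq_iff.mp hh with ⟨hh1, -⟩ | ⟨hh1, -⟩
      · exact h1.ne (ii1_inj.mp hh1)
      · exact ii1_ne_ii2 hh1
    · intro x y hx hy hh
      exact absurd hh sne_22_mix
  -- ¬ G₂.Colorable k
  have s3 : ¬ G₂.Colorable k := by
    rintro ⟨D₂⟩
    obtain ⟨C₁⟩ := s1
    have hC₁ : ∀ x y, G₁.Adj x y → s(x,y) ≠ s(v₁,w₁) → C₁ x ≠ C₁ y :=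
      fun x y h hne => del_valid C₁ h hne
    have hmain : ∀ c₂ : V₂ → Fin k, (∀ x y, G₂.Adj x y → c₂ x ≠ c₂ y) →
        c₂ v₂ = C₁ v₁ → C₁ w₁ = c₂ w₂ := by
      intro c₂ hval hvv
      by_contra hne
      apply hJ2
      rw [← SimpleGraph.deleteEdges_empty (G := hajosJoin G₁ G₂ v₁ w₁ v₂ w₂)]
      refine master h2 ∅ (⇑C₁) c₂ ?_ ?_ ?_ ?_
      · intro x y hxy hn1' hn2' _
        refine hC₁ x y hxy ?_
        intro hh
        rcases Sym2.eq_iff.mp hh with ⟨h', h''⟩ | ⟨h', h''⟩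
        · exact hn1' ⟨h', h''⟩
        · exact hn2' ⟨h', h''⟩
      · exact fun x y hx hy hxy _ => hval x y hxy
      · intro y hy hvy hyw _
        rw [← hvv]
        exact hval v₂ y hvy
      · exact fun _ => hne
    set c₂ : V₂ → Fin k := fun y => Equiv.swap (D₂ v₂) (C₁ v₁) (D₂ y) with hc₂def
    have hval : ∀ x y, G₂.Adj x y → c₂ x ≠ c₂ y :=
      fun x y h hh => D₂.valid h ((Equiv.swap _ _).injective hh)
    have hvv : c₂ v₂ = C₁ v₁ := Equiv.swap_apply_left _ _
    have hmain1 := hmain c₂ hval hvv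
    have hvwne : C₁ v₁ ≠ C₁ w₁ := by
      rw [← hvv, hmain1]
      exact hval v₂ w₂ h2
    obtain ⟨t, ht1, ht2⟩ := third_color hk (C₁ v₁) (C₁ w₁)
    set c₂' : V₂ → Fin k := fun y => Equiv.swap (C₁ w₁) t (c₂ y) with hc₂'def
    have hval' : ∀ x y, G₂.Adj x y → c₂' x ≠ c₂' y :=
      fun x y h hh => hval x y h ((Equiv.swap _ _).injective hh)
    have hvv' : c₂' v₂ = C₁ v₁ := by
      show Equiv.swap (C₁ w₁) t (c₂ v₂) = C₁ v₁
      rw [hvv]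
      exact Equiv.swap_apply_of_ne_of_ne hvwne (Ne.symm ht1)
    have hmain2 := hmain c₂' hval' hvv'
    have hw : c₂' w₂ = t := by
      show Equiv.swap (C₁ w₁) t (c₂ w₂) = t
      rw [← hmain1]
      exact Equiv.swap_apply_left _ _
    rw [hw] at hmain2
    exact ht2 hmain2.symm
  -- ¬ G₁.Colorable k
  have s3' : ¬ G₁.Colorable k := by
    rintro ⟨D₁⟩
    obtain ⟨C₂⟩ := s2
    have hC₂ : ∀ x y, G₂.Adj x y → s(x,y) ≠ s(v₂,w₂) → C₂ x ≠ C₂ y :=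
      fun x y h hne => del_valid C₂ h hne
    have hmain : ∀ (c₁ : V₁ → Fin k) (c₂ : V₂ → Fin k),
        (∀ x y, G₁.Adj x y → c₁ x ≠ c₁ y) →
        (∀ x y, G₂.Adj x y → s(x,y) ≠ s(v₂,w₂) → c₂ x ≠ c₂ y) →
        c₁ v₁ = c₂ v₂ → c₁ w₁ = c₂ w₂ := by
      intro c₁ c₂ hval1 hval2 hvv
      by_contra hne
      apply hJ2
      rw [← SimpleGraph.deleteEdges_empty (G := hajosJoin G₁ G₂ v₁ w₁ v₂ w₂)]
      refine master h2 ∅ c₁ c₂ ?_ ?_ ?_ ?_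
      · exact fun x y hxy _ _ _ => hval1 x y hxy
      · intro x y hx hy hxy _
        refine hval2 x y hxy ?_
        intro hh
        rcases Sym2.eq_iff.mp hh with ⟨h', h''⟩ | ⟨h', h''⟩
        · exact hx h'
        · exact hy h''
      · intro y hy hvy hyw _
        rw [hvv]
        refine hval2 v₂ y hvy ?_
        intro hh
        rcases Sym2.eq_iff.mp hh with ⟨h', h''⟩ | ⟨h', h''⟩
        · exact hyw h''
        · exact h2.ne h'
      · exact fun _ => hne
    set c₁ : V₁ → Fin k := fun x => Equiv.swap (D₁ v₁) (C₂ v₂) (D₁ x) with hc₁def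
    have hval1 : ∀ x y, G₁.Adj x y → c₁ x ≠ c₁ y :=
      fun x y h hh => D₁.valid h ((Equiv.swap _ _).injective hh)
    have hvv : c₁ v₁ = C₂ v₂ := Equiv.swap_apply_left _ _
    have hmain1 := hmain c₁ (⇑C₂) hval1 hC₂ hvv
    have hvwne : C₂ v₂ ≠ C₂ w₂ := by
      rw [← hvv, ← hmain1]
      exact hval1 v₁ w₁ h1
    obtain ⟨t, ht1, ht2⟩ := third_color hk (C₂ v₂) (C₂ w₂)
    set c₂' : V₂ → Fin k := fun y => Equiv.swap (C₂ w₂) t (C₂ y) with hc₂'def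
    have hval2' : ∀ x y, G₂.Adj x y → s(x,y) ≠ s(v₂,w₂) → c₂' x ≠ c₂' y :=
      fun x y h hne hh => hC₂ x y h hne ((Equiv.swap _ _).injective hh)
    have hvv' : c₁ v₁ = c₂' v₂ := by
      show c₁ v₁ = Equiv.swap (C₂ w₂) t (C₂ v₂)
      rw [hvv]
      exact (Equiv.swap_apply_of_ne_of_ne hvwne (Ne.symm ht1)).symm
    have hmain2 := hmain c₁ c₂' hval1 hval2' hvv'
    have hw : c₂' w₂ = t := by
      show Equiv.swap (C₂ w₂) t (C₂ w₂) = t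
      exact Equiv.swap_apply_left _ _
    rw [hw, hmain1] at hmain2
    exact ht2 hmain2.symm
  -- every edge of G₁ can be removed
  have s5₁ : ∀ x y, G₁.Adj x y → (G₁.deleteEdges {s(x,y)}).Colorable k := by
    intro x y hxy
    by_cases hp : s(x,y) = s(v₁,w₁)
    · rw [hp]; exact s1
    · have hn1 : ¬(x = v₁ ∧ y = w₁) := by rintro ⟨rfl, rfl⟩; exact hp rfl
      have hn2 : ¬(x = w₁ ∧ y = v₁) := by rintro ⟨rfl, rfl⟩; exact hp Sym2.eq_swap
      obtain ⟨C⟩ := hJ4 _ _ (adj1 (G₂ := G₂) (v₂ := v₂) (w₂ := w₂) hxy hn1 hn2)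
      by_cases hcase : C (ii1 v₂ v₁) = C (ii1 v₂ w₁)
      · exfalso
        apply s3
        refine ⟨Coloring.mk (extC v₁ (⇑C)) ?_⟩
        intro a b hab
        by_cases hq : s(a,b) = s(v₂,w₂)
        · have hkey : extC v₁ (⇑C) v₂ ≠ extC v₁ (⇑C) w₂ := by
            rw [extC_v2, extC_ne _ h2.ne', hcase]
            exact del_valid C (adj4 h2) (Ne.symm sne_11_mix)
          rcases Sym2.eq_iff.mp hq with ⟨rfl, rfl⟩ | ⟨rfl, rfl⟩
          · exact hkey
          · exact hkey.symm
        · refine ext2_valid h2 C (f := s(v₂,w₂)) ?_ ?_ a b hab hq hq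
          · intro y' hy' hh
            exact absurd hh.symm sne_11_mix
          · intro x' y' hx' hy' hh
            exact absurd hh.symm sne_11_22
      · refine ⟨Coloring.mk (fun z => C (ii1 v₂ z)) ?_⟩
        intro a b hab
        rw [SimpleGraph.deleteEdges_adj] at hab
        obtain ⟨hab, hnf⟩ := hab
        by_cases hq : s(a,b) = s(v₁,w₁)
        · rcases Sym2.eq_iff.mp hq with ⟨rfl, rfl⟩ | ⟨rfl, rfl⟩
          · exact hcase
          · exact fun hh => hcase hh.symm
        · exact restr1_valid C (f := s(x,y)) (fun x' y' hh => s11_eq_iff.mp hh) a b hab hq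
            (by simpa using hnf)
  -- every edge of G₂ can be removed
  have aux3 : ∀ y₀, G₂.Adj v₂ y₀ → y₀ ≠ w₂ → (G₂.deleteEdges {s(v₂,y₀)}).Colorable k := by
    intro y₀ hvy hyw
    obtain ⟨C⟩ := hJ4 _ _ (adj3 (G₁ := G₁) (v₁ := v₁) (w₁ := w₁) hvy hyw)
    by_cases hcase : C (ii1 v₂ v₁) = C (ii2 w₂ h2.ne')
    · exfalso
      apply s3'
      refine ⟨Coloring.mk (fun z => C (ii1 v₂ z)) ?_⟩
      intro a b hab
      by_cases hq : s(a,b) = s(v₁,w₁)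
      · have hkey : C (ii1 v₂ v₁) ≠ C (ii1 v₂ w₁) := by
          rw [hcase]
          refine fun hh => del_valid C (adj4 h2) ?_ hh.symm
          intro hh'
          exact h1.ne ((mix_eq_iff.mp hh').1.symm)
        rcases Sym2.eq_iff.mp hq with ⟨rfl, rfl⟩ | ⟨rfl, rfl⟩
        · exact hkey
        · exact hkey.symm
      · exact restr1_valid C (f := s(v₁,w₁)) (fun x' y' hh => absurd hh sne_11_mix)
          a b hab hq hq
    · refine ⟨Coloring.mk (extC v₁ (⇑C)) ?_⟩
      intro a b hab
      rw [SimpleGraph.deleteEdges_adj] at hab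
      obtain ⟨hab, hnf⟩ := hab
      by_cases hq : s(a,b) = s(v₂,w₂)
      · have hkey : extC v₁ (⇑C) v₂ ≠ extC v₁ (⇑C) w₂ := by
          rw [extC_v2, extC_ne _ h2.ne']
          exact hcase
        rcases Sym2.eq_iff.mp hq with ⟨rfl, rfl⟩ | ⟨rfl, rfl⟩
        · exact hkey
        · exact hkey.symm
      · refine ext2_valid h2 C (f := s(v₂,y₀)) ?_ ?_ a b hab hq (by simpa using hnf)
        · intro y' hy' hh
          rw [(mix_eq_iff.mp hh).2]
        · intro x' y' hx' hy' hh
          exact absurd hh sne_22_mix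
  have s5₂ : ∀ x y, G₂.Adj x y → (G₂.deleteEdges {s(x,y)}).Colorable k := by
    intro x y hxy
    by_cases hp : s(x,y) = s(v₂,w₂)
    · rw [hp]; exact s2
    by_cases hx : x = v₂
    · subst hx
      refine aux3 y hxy ?_
      rintro rfl
      exact hp rfl
    by_cases hy : y = v₂
    · subst hy
      rw [Sym2.eq_swap]
      refine aux3 x hxy.symm ?_
      rintro rfl
      exact hp Sym2.eq_swap
    · obtain ⟨C⟩ := hJ4 _ _ (adj2 (G₁ := G₁) (v₁ := v₁) (w₁ := w₁) hx hy hxy)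
      by_cases hcase : C (ii1 v₂ v₁) = C (ii2 w₂ h2.ne')
      · exfalso
        apply s3'
        refine ⟨Coloring.mk (fun z => C (ii1 v₂ z)) ?_⟩
        intro a b hab
        by_cases hq : s(a,b) = s(v₁,w₁)
        · have hkey : C (ii1 v₂ v₁) ≠ C (ii1 v₂ w₁) := by
            rw [hcase]
            refine fun hh => del_valid C (adj4 h2) ?_ hh.symm
            intro hh'
            exact sne_22_mix hh'.symm
          rcases Sym2.eq_iff.mp hq with ⟨rfl, rfl⟩ | ⟨rfl, rfl⟩
          · exact hkey
          · exact hkey.symm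
        · exact restr1_valid C (f := s(v₁,w₁)) (fun x' y' hh => absurd hh sne_11_22)
            a b hab hq hq
      · refine ⟨Coloring.mk (extC v₁ (⇑C)) ?_⟩
        intro a b hab
        rw [SimpleGraph.deleteEdges_adj] at hab
        obtain ⟨hab, hnf⟩ := hab
        by_cases hq : s(a,b) = s(v₂,w₂)
        · have hkey : extC v₁ (⇑C) v₂ ≠ extC v₁ (⇑C) w₂ := by
            rw [extC_v2, extC_ne _ h2.ne']
            exact hcase
          rcases Sym2.eq_iff.mp hq with ⟨rfl, rfl⟩ | ⟨rfl, rfl⟩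
          · exact hkey
          · exact hkey.symm
        · refine ext2_valid h2 C (f := s(x,y)) ?_ ?_ a b hab hq (by simpa using hnf)
          · intro y' hy' hh
            exact absurd hh (Ne.symm sne_22_mix)
          · intro x' y' hx' hy' hh
            exact s22_eq_iff.mp hh
  -- no isolated vertices
  have s6₁ : ∀ x : V₁, ∃ u, G₁.Adj x u := by
    intro x
    by_cases hx1 : x = v₁
    · exact ⟨w₁, hx1 ▸ h1⟩
    by_cases hx2 : x = w₁
    · exact ⟨v₁, hx2 ▸ h1.symm⟩
    obtain ⟨b, hb⟩ := hJ3 (ii1 v₂ x)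
    rcases (hajos_adj.mp hb).2 with h | h
    · rcases h with ⟨x', y', hax, hby, h3, -, -⟩ | ⟨x', y', hax, -, -⟩ |
        ⟨y', hax, -, -, -⟩ | ⟨hax, -⟩
      · have hxx : x = x' := by simpa [ii1] using hax
        exact ⟨y', hxx ▸ h3⟩
      · exact absurd hax (by simp [ii1])
      · have : x = v₁ := by simpa [ii1] using hax
        exact absurd this hx1
      · have : x = w₁ := by simpa [ii1] using hax
        exact absurd this hx2
    · rcases h with ⟨x', y', hax, hby, h3, -, -⟩ | ⟨x', y', -, hby, -⟩ |
        ⟨y', -, hby, -, -⟩ | ⟨-, hby⟩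
      · have hxy' : x = y' := by simpa [ii1] using hby
        exact ⟨x', (hxy' ▸ h3.symm : G₁.Adj x x')⟩
      · exact absurd hby (by simp [ii1])
      · exact absurd hby (by simp [ii1])
      · exact absurd hby (by simp [ii1])
  have s6₂ : ∀ y : V₂, ∃ u, G₂.Adj y u := by
    intro y
    by_cases hy1 : y = v₂
    · exact ⟨w₂, hy1 ▸ h2⟩
    by_cases hy2 : y = w₂
    · exact ⟨v₂, hy2 ▸ h2.symm⟩
    obtain ⟨b, hb⟩ := hJ3 (ii2 y hy1)
    rcases (hajos_adj.mp hb).2 with h | h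
    · rcases h with ⟨x', y', hax, -, -, -, -⟩ | ⟨x', y', hax, hby, h3⟩ |
        ⟨y', hax, -, -, -⟩ | ⟨hax, -⟩
      · exact absurd hax (by simp [ii2])
      · have hxx : y = x' := by simpa [ii2] using hax
        exact ⟨y', hxx ▸ h3⟩
      · exact absurd hax (by simp [ii2])
      · exact absurd hax (by simp [ii2])
    · rcases h with ⟨x', y', -, hby, -, -, -⟩ | ⟨x', y', hax, hby, h3⟩ |
        ⟨y', hax, hby, h3, -⟩ | ⟨-, hby⟩
      · exact absurd hby (by simp [ii2])
      · have hyy : y = y' := by simpa [ii2] using hby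
        exact ⟨x', (hyy ▸ h3.symm : G₂.Adj y x')⟩
      · have hyy : y = y' := by simpa [ii2] using hby
        exact ⟨v₂, ((hyy ▸ h3 : G₂.Adj v₂ y).symm : G₂.Adj y v₂)⟩
      · have : y = w₂ := by simpa [ii2] using hby
        exact absurd this hy2
  exact ⟨⟨colorable_succ s1, s3', s6₁, s5₁⟩, ⟨colorable_succ s2, s3, s6₂, s5₂⟩⟩

end Join

end HajosAux


/-- (Hajós 1961) A Hajós join is critical with chromatic
number `k+1` (`k ≥ 3`) iff both constituents are. -/
theorem hajos_join_critical_iff {V V₁ V₂ : Type} [Fintype V] [Fintype V₁] [Fintype V₂]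
    (G : SimpleGraph V) (G₁ : SimpleGraph V₁) (G₂ : SimpleGraph V₂) (k : ℕ) (hk : 3 ≤ k)
    (h : IsHajosJoin G G₁ G₂) :
    (IsCritical G ∧ G.chromaticNumber = (↑(k + 1) : ℕ∞)) ↔
      ((IsCritical G₁ ∧ G₁.chromaticNumber = (↑(k + 1) : ℕ∞)) ∧
       (IsCritical G₂ ∧ G₂.chromaticNumber = (↑(k + 1) : ℕ∞))) := by
  obtain ⟨v₁, w₁, v₂, w₂, h1, h2, ⟨e⟩⟩ := h
  rw [HajosAux.crit_iff_good hk, HajosAux.crit_iff_good hk, HajosAux.crit_iff_good hk,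
    HajosAux.good_iff_of_iso e]
  exact ⟨fun hg => HajosAux.join_good hk h1 h2 hg,
    fun hg => HajosAux.good_join hk h1 h2 hg.1 hg.2⟩
end

section
/- Let G be a critical graph with chromatic number k+1 for an integer k ≥ 3. If G has a separating set consisting of one edge and one vertex, then G is the Hajós join of two graphs. -/
open SimpleGraph

section AuxHajos

set_option linter.unusedSectionVars false
set_option linter.unusedVariables false

variable {V : Type} [Fintype V] {G : SimpleGraph V} {k : ℕ}

lemma my_not_col (hchi : G.chromaticNumber = ((k+1:ℕ) : ℕ∞)) : ¬ G.Colorable k := by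
  intro h
  have := chromaticNumber_le_iff_colorable.mpr h
  rw [hchi] at this
  exact absurd (Nat.cast_le.mp this) (by omega)

lemma my_sub_col (hcrit : IsCritical G) (hchi : G.chromaticNumber = ((k+1:ℕ) : ℕ∞))
    (H : G.Subgraph) (hne : H ≠ ⊤) : H.coe.Colorable k := by
  have h := hcrit H hne
  rw [hchi] at h
  rw [← chromaticNumber_le_iff_colorable]
  exact (ENat.lt_add_one_iff (by simp)).mp (by exact_mod_cast h)


def indSub (G : SimpleGraph V) (S : Set V) : G.Subgraph where
  verts := S
  Adj a b := a ∈ S ∧ b ∈ S ∧ G.Adj a b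
  adj_sub h := h.2.2
  edge_vert h := h.1
  symm := ⟨fun a b h => ⟨h.2.1, h.1, h.2.2.symm⟩⟩

def delSub (G : SimpleGraph V) (x y : V) : G.Subgraph where
  verts := Set.univ
  Adj a b := G.Adj a b ∧ s(a, b) ≠ s(x, y)
  adj_sub h := h.1
  edge_vert _ := Set.mem_univ _
  symm := ⟨fun a b h => ⟨h.1.symm, by rw [Sym2.eq_swap]; exact h.2⟩⟩

lemma crit_part_col (hcrit : IsCritical G) (hchi : G.chromaticNumber = ((k+1:ℕ) : ℕ∞))
    (hk : 0 < k) {S : Set V} (hS : S ≠ Set.univ) :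
    ∃ φ : V → Fin k, ∀ a b, a ∈ S → b ∈ S → G.Adj a b → φ a ≠ φ b := by
  classical
  have : Nonempty (Fin k) := ⟨⟨0, hk⟩⟩
  have hne : indSub G S ≠ ⊤ := by
    intro h
    exact hS (by simpa [indSub] using congrArg SimpleGraph.Subgraph.verts h)
  obtain ⟨C⟩ := my_sub_col hcrit hchi _ hne
  refine ⟨fun x => if h : x ∈ S then C ⟨x, h⟩ else Classical.arbitrary _, ?_⟩
  intro a b ha hb hab
  simp only [dif_pos ha, dif_pos hb]
  exact C.valid (show (indSub G S).coe.Adj ⟨a, ha⟩ ⟨b, hb⟩ from ⟨ha, hb, hab⟩)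

lemma crit_deledge_col (hcrit : IsCritical G) (hchi : G.chromaticNumber = ((k+1:ℕ) : ℕ∞))
    {x y : V} (hxy : G.Adj x y) :
    ∃ φ : V → Fin k, ∀ a b, G.Adj a b → s(a, b) ≠ s(x, y) → φ a ≠ φ b := by
  have hne : delSub G x y ≠ ⊤ := by
    intro h
    have : (delSub G x y).Adj x y := by rw [h]; simpa using hxy
    exact this.2 rfl
  obtain ⟨C⟩ := my_sub_col hcrit hchi _ hne
  refine ⟨fun v => C ⟨v, Set.mem_univ v⟩, ?_⟩
  intro a b hab he
  exact C.valid (show (delSub G x y).coe.Adj ⟨a, Set.mem_univ a⟩ ⟨b, Set.mem_univ b⟩ from ⟨hab, he⟩)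

lemma glue_alpha (hcrit : IsCritical G) (hchi : G.chromaticNumber = ((k+1:ℕ) : ℕ∞))
    (hk : 0 < k) {v : V} {A B : Set V} (hAB : A ∪ B = {v}ᶜ) (hdisj : A ∩ B = ∅)
    (hA : A.Nonempty) (hB : B.Nonempty)
    (hcross : ∀ a ∈ A, ∀ b ∈ B, ¬ G.Adj a b) : False := by
  classical
  obtain ⟨a₀, ha₀⟩ := hA
  obtain ⟨b₀, hb₀⟩ := hB
  have hVA : A ⊆ {v}ᶜ := hAB ▸ Set.subset_union_left
  have hVB : B ⊆ {v}ᶜ := hAB ▸ Set.subset_union_right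
  have hS₁ : (insert v A : Set V) ≠ Set.univ := by
    intro h
    have hb : b₀ ∈ insert v A := h ▸ Set.mem_univ b₀
    rcases hb with h' | h'
    · exact hVB hb₀ h'
    · exact Set.eq_empty_iff_forall_notMem.mp hdisj b₀ ⟨h', hb₀⟩
  have hS₂ : (insert v B : Set V) ≠ Set.univ := by
    intro h
    have hb : a₀ ∈ insert v B := h ▸ Set.mem_univ a₀
    rcases hb with h' | h'
    · exact hVA ha₀ h'
    · exact Set.eq_empty_iff_forall_notMem.mp hdisj a₀ ⟨ha₀, h'⟩
  obtain ⟨φ₁, hφ₁⟩ := crit_part_col hcrit hchi hk hS₁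
  obtain ⟨φ₂, hφ₂⟩ := crit_part_col hcrit hchi hk hS₂
  set σ := Equiv.swap (φ₂ v) (φ₁ v) with hσ
  set φ : V → Fin k := fun x => if x ∈ insert v A then φ₁ x else σ (φ₂ x) with hφ
  have hnotin : ∀ x : V, x ∉ (insert v A : Set V) → x ∈ B := by
    intro x hx
    have hxv : x ≠ v := fun h => hx (h ▸ Set.mem_insert v A)
    have : x ∈ A ∪ B := hAB ▸ hxv
    rcases this with h | h
    · exact absurd (Set.mem_insert_of_mem v h) hx
    · exact h
  have hcol : ∀ {a b : V}, G.Adj a b → φ a ≠ φ b := by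
    intro a b hab
    by_cases ha : a ∈ (insert v A : Set V) <;> by_cases hb : b ∈ (insert v A : Set V) <;>
      simp only [hφ, if_pos, if_neg, ha, hb, if_true, if_false]
    · exact hφ₁ a b ha hb hab
    · have hbB := hnotin b hb
      rcases ha with h | h
      · subst h
        have h1 : φ₁ a = σ (φ₂ a) := (Equiv.swap_apply_left _ _).symm
        rw [h1]
        intro h2
        exact hφ₂ a b (Set.mem_insert a B) (Set.mem_insert_of_mem a hbB) hab (σ.injective h2)
      · exact absurd hab (hcross a h b hbB)
    · have haB := hnotin a ha
      rcases hb with h | h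
      · subst h
        have h1 : φ₁ b = σ (φ₂ b) := (Equiv.swap_apply_left _ _).symm
        rw [h1]
        intro h2
        exact hφ₂ a b (Set.mem_insert_of_mem b haB) (Set.mem_insert b B) hab (σ.injective h2)
      · exact absurd hab.symm (hcross b h a haB)
    · intro h2
      exact hφ₂ a b (Set.mem_insert_of_mem v (hnotin a ha))
        (Set.mem_insert_of_mem v (hnotin b hb)) hab (σ.injective h2)
  exact my_not_col hchi ⟨SimpleGraph.Coloring.mk φ hcol⟩

lemma glue_beta (hcrit : IsCritical G) (hchi : G.chromaticNumber = ((k+1:ℕ) : ℕ∞))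
    (hk : 3 ≤ k) {v w₁ w₂ : V} {A B : Set V} (hAB : A ∪ B = {v}ᶜ) (hdisj : A ∩ B = ∅)
    (hw₁ : w₁ ∈ A) (hw₂ : w₂ ∈ B) (hadj : G.Adj w₁ w₂)
    (hcross : ∀ a ∈ A, ∀ b ∈ B, G.Adj a b → a = w₁ ∧ b = w₂) :
    ¬ G.Adj v w₁ ∧ ¬ G.Adj v w₂ := by
  classical
  have hVA : A ⊆ {v}ᶜ := hAB ▸ Set.subset_union_left
  have hVB : B ⊆ {v}ᶜ := hAB ▸ Set.subset_union_right
  have hw₁v : w₁ ≠ v := hVA hw₁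
  have hw₂v : w₂ ≠ v := hVB hw₂
  have hw₁B : w₁ ∉ B := fun h => Set.eq_empty_iff_forall_notMem.mp hdisj w₁ ⟨hw₁, h⟩
  have hw₂A : w₂ ∉ A := fun h => Set.eq_empty_iff_forall_notMem.mp hdisj w₂ ⟨h, hw₂⟩
  obtain ⟨φ, hφ⟩ := crit_deledge_col (k := k) hcrit hchi hadj
  -- sym2 helper
  have hsym : ∀ a b : V, s(a, b) = s(w₁, w₂) → (a = w₁ ∧ b = w₂) ∨ (a = w₂ ∧ b = w₁) := by
    intro a b h
    rw [Sym2.eq_iff] at h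
    tauto
  have hww : φ w₁ = φ w₂ := by
    by_contra hne
    refine my_not_col hchi ⟨SimpleGraph.Coloring.mk φ ?_⟩
    intro a b hab
    by_cases he : s(a, b) = s(w₁, w₂)
    · rcases hsym a b he with ⟨h1, h2⟩ | ⟨h1, h2⟩ <;> subst h1 <;> subst h2
      · exact hne
      · exact fun h => hne h.symm
    · exact hφ a b hab he
  have main : ¬ (G.Adj v w₁ ∨ G.Adj v w₂) := by
    intro hvadj
    have hvw2ne : s(v, w₂) ≠ s(w₁, w₂) := by
      intro h
      rcases hsym v w₂ h with ⟨h1, _⟩ | ⟨h1, _⟩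
      · exact hw₁v h1.symm
      · exact hw₂v h1.symm
    have hvw1ne : s(v, w₁) ≠ s(w₁, w₂) := by
      intro h
      rcases hsym v w₁ h with ⟨h1, _⟩ | ⟨h1, h2⟩
      · exact hw₁v h1.symm
      · exact hw₂v h1.symm
    have hvc : φ v ≠ φ w₂ := by
      rcases hvadj with h | h
      · exact hww ▸ hφ v w₁ h hvw1ne
      · exact hφ v w₂ h hvw2ne
    -- third color
    obtain ⟨c', hc'1, hc'2⟩ : ∃ c' : Fin k, c' ≠ φ v ∧ c' ≠ φ w₂ := by
      by_contra h
      push_neg at h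
      have hsub : (Finset.univ : Finset (Fin k)) ⊆ {φ v, φ w₂} := by
        intro x _
        simp only [Finset.mem_insert, Finset.mem_singleton]
        rcases eq_or_ne x (φ v) with h' | h'
        · exact Or.inl h'
        · exact Or.inr (h x h')
      have hcard := Finset.card_le_card hsub
      have : ({φ v, φ w₂} : Finset (Fin k)).card ≤ 2 :=
        le_trans (Finset.card_insert_le _ _) (by simp)
      simp only [Finset.card_univ, Fintype.card_fin] at hcard
      omega
    set σ := Equiv.swap (φ w₂) c' with hσ
    have hσfix : σ (φ v) = φ v :=
      Equiv.swap_apply_of_ne_of_ne hvc (fun h => hc'1 h.symm)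
    set ψ : V → Fin k := fun x => if x ∈ B then σ (φ x) else φ x with hψ
    have hnotB : ∀ x : V, x ∉ B → x ≠ v → x ∈ A := by
      intro x hx hxv
      have hx2 : x ∈ A ∪ B := hAB ▸ hxv
      rcases hx2 with h | h
      · exact h
      · exact absurd h hx
    have hinside : ∀ a b : V, a ∉ B → b ∉ B → s(a, b) ≠ s(w₁, w₂) := by
      intro a b ha hb h
      rcases hsym a b h with ⟨_, h2⟩ | ⟨h1, _⟩
      · exact hb (h2 ▸ hw₂)
      · exact ha (h1 ▸ hw₂)
    have hBside : ∀ a b : V, a ∈ B → b ∈ B → s(a, b) ≠ s(w₁, w₂) := by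
      intro a b ha hb h
      rcases hsym a b h with ⟨h1, _⟩ | ⟨_, h2⟩
      · exact hw₁B (h1 ▸ ha)
      · exact hw₁B (h2 ▸ hb)
    have hmix : ∀ a b : V, a ∉ B → b ∈ B → G.Adj a b → ψ a ≠ ψ b := by
      intro a b ha hb hab
      simp only [hψ, if_neg ha, if_pos hb]
      rcases eq_or_ne a v with rfl | hav
      · -- a = v
        have : φ a ≠ φ b := by
          refine hφ a b hab ?_
          intro h
          rcases hsym a b h with ⟨h1, _⟩ | ⟨h1, _⟩
          · exact hw₁v h1.symm
          · exact hw₂v h1.symm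
        rw [← hσfix]
        exact fun h => this (σ.injective h)
      · have haA := hnotB a ha hav
        obtain ⟨h1, h2⟩ := hcross a haA b hb hab
        subst h1; subst h2
        rw [hww, Equiv.swap_apply_left]
        exact fun h => hc'2 h.symm
    refine my_not_col hchi ⟨SimpleGraph.Coloring.mk ψ ?_⟩
    intro a b hab
    by_cases ha : a ∈ B <;> by_cases hb : b ∈ B
    · simp only [hψ, if_pos ha, if_pos hb]
      exact fun h => hφ a b hab (hBside a b ha hb) (σ.injective h)
    · exact fun h => hmix b a hb ha hab.symm h.symm
    · exact hmix a b ha hb hab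
    · simp only [hψ, if_neg ha, if_neg hb]
      exact hφ a b hab (hinside a b ha hb)
  exact ⟨fun h => main (Or.inl h), fun h => main (Or.inr h)⟩

lemma construct {v w₁ w₂ : V} {A B : Set V} (hAB : A ∪ B = {v}ᶜ) (hdisj : A ∩ B = ∅)
    (hw₁ : w₁ ∈ A) (hw₂ : w₂ ∈ B) (hadj : G.Adj w₁ w₂)
    (hcross : ∀ a ∈ A, ∀ b ∈ B, G.Adj a b → a = w₁ ∧ b = w₂)
    (hnv₁ : ¬ G.Adj v w₁) (hnv₂ : ¬ G.Adj v w₂) :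
    ∃ (V₁ V₂ : Type) (_ : Fintype V₁) (_ : Fintype V₂)
      (G₁ : SimpleGraph V₁) (G₂ : SimpleGraph V₂), IsHajosJoin G G₁ G₂ := by
  classical
  have hVA : A ⊆ {v}ᶜ := hAB ▸ Set.subset_union_left
  have hVB : B ⊆ {v}ᶜ := hAB ▸ Set.subset_union_right
  have hw₁v : w₁ ≠ v := hVA hw₁
  have hw₂v : w₂ ≠ v := hVB hw₂
  have hw₁B : w₁ ∉ B := fun h => Set.eq_empty_iff_forall_notMem.mp hdisj w₁ ⟨hw₁, h⟩
  have hw₂A : w₂ ∉ A := fun h => Set.eq_empty_iff_forall_notMem.mp hdisj w₂ ⟨h, hw₂⟩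
  set SA : Set V := insert v A with hSA
  set SB : Set V := insert v B with hSB
  set G₁ : SimpleGraph ↥SA :=
    SimpleGraph.fromRel (fun a b => G.Adj a.1 b.1 ∨ (a.1 = v ∧ b.1 = w₁)) with hG₁def
  set G₂ : SimpleGraph ↥SB :=
    SimpleGraph.fromRel (fun a b => G.Adj a.1 b.1 ∨ (a.1 = v ∧ b.1 = w₂)) with hG₂def
  have hG₁ : ∀ a b : ↥SA, G₁.Adj a b ↔
      (a.1 ≠ b.1 ∧ (G.Adj a.1 b.1 ∨ (a.1 = v ∧ b.1 = w₁) ∨ (b.1 = v ∧ a.1 = w₁))) := by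
    intro a b
    rw [hG₁def, SimpleGraph.fromRel_adj]
    constructor
    · rintro ⟨hne, h⟩
      refine ⟨fun h' => hne (Subtype.ext h'), ?_⟩
      rcases h with (h | h) | (h | h)
      · exact Or.inl h
      · exact Or.inr (Or.inl h)
      · exact Or.inl h.symm
      · exact Or.inr (Or.inr h)
    · rintro ⟨hne, h⟩
      refine ⟨fun h' => hne (congrArg Subtype.val h'), ?_⟩
      rcases h with h | h | h
      · exact Or.inl (Or.inl h)
      · exact Or.inl (Or.inr h)
      · exact Or.inr (Or.inr h)
  have hG₂ : ∀ a b : ↥SB, G₂.Adj a b ↔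
      (a.1 ≠ b.1 ∧ (G.Adj a.1 b.1 ∨ (a.1 = v ∧ b.1 = w₂) ∨ (b.1 = v ∧ a.1 = w₂))) := by
    intro a b
    rw [hG₂def, SimpleGraph.fromRel_adj]
    constructor
    · rintro ⟨hne, h⟩
      refine ⟨fun h' => hne (Subtype.ext h'), ?_⟩
      rcases h with (h | h) | (h | h)
      · exact Or.inl h
      · exact Or.inr (Or.inl h)
      · exact Or.inl h.symm
      · exact Or.inr (Or.inr h)
    · rintro ⟨hne, h⟩
      refine ⟨fun h' => hne (congrArg Subtype.val h'), ?_⟩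
      rcases h with h | h | h
      · exact Or.inl (Or.inl h)
      · exact Or.inl (Or.inr h)
      · exact Or.inr (Or.inr h)
  set v₁ : ↥SA := ⟨v, Set.mem_insert _ _⟩ with hv₁
  set W₁ : ↥SA := ⟨w₁, Set.mem_insert_of_mem _ hw₁⟩ with hW₁
  set v₂ : ↥SB := ⟨v, Set.mem_insert _ _⟩ with hv₂
  set W₂ : ↥SB := ⟨w₂, Set.mem_insert_of_mem _ hw₂⟩ with hW₂
  have hadj₁ : G₁.Adj v₁ W₁ := (hG₁ v₁ W₁).mpr ⟨fun h => hw₁v h.symm, Or.inr (Or.inl ⟨rfl, rfl⟩)⟩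
  have hadj₂ : G₂.Adj v₂ W₂ := (hG₂ v₂ W₂).mpr ⟨fun h => hw₂v h.symm, Or.inr (Or.inl ⟨rfl, rfl⟩)⟩
  have memB : ∀ x : V, x ∉ SA → x ∈ SB := by
    intro x hx
    have hxv : x ≠ v := fun h => hx (h ▸ Set.mem_insert _ _)
    have hx2 : x ∈ A ∪ B := hAB ▸ hxv
    rcases hx2 with h | h
    · exact absurd (Set.mem_insert_of_mem v h) hx
    · exact Set.mem_insert_of_mem v h
  have hxnev : ∀ x : V, x ∉ SA → x ≠ v := fun x hx h => hx (h ▸ Set.mem_insert _ _)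
  set T := {t : ↥SA ⊕ ↥SB // t ≠ Sum.inr v₂} with hT
  set f : V → T := fun x =>
    if h : x ∈ SA then ⟨Sum.inl ⟨x, h⟩, fun hc => by simp at hc⟩
    else ⟨Sum.inr ⟨x, memB x h⟩,
      fun hc => hxnev x h (congrArg Subtype.val (Sum.inr.inj hc))⟩ with hf
  set g : T → V := fun t => Sum.elim (fun a => a.1) (fun b => b.1) t.1 with hg
  have hleft : Function.LeftInverse g f := by
    intro x
    by_cases h : x ∈ SA
    · simp [hf, hg, dif_pos h]
    · simp [hf, hg, dif_neg h]
  have hright : Function.RightInverse g f := by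
    rintro ⟨t, ht⟩
    rcases t with a | b
    · have ha : (g ⟨Sum.inl a, ht⟩) = a.1 := rfl
      rw [hf]
      apply Subtype.ext
      simp only [ha, dif_pos a.2]
    · have hb : (g ⟨Sum.inr b, ht⟩) = b.1 := rfl
      have hbv : b.1 ≠ v := fun h => ht (by
        apply congrArg Sum.inr
        exact Subtype.ext h)
      have hbB : b.1 ∈ B := by
        rcases b.2 with h | h
        · exact absurd h hbv
        · exact h
      have hbSA : b.1 ∉ SA := by
        intro h
        rcases h with h | h
        · exact hbv h
        · exact Set.eq_empty_iff_forall_notMem.mp hdisj b.1 ⟨h, hbB⟩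
      rw [hf]
      apply Subtype.ext
      simp only [hb, dif_neg hbSA]
  set E : V ≃ T := ⟨f, g, hleft, hright⟩ with hE
  refine ⟨↥SA, ↥SB, (Set.toFinite SA).fintype, (Set.toFinite SB).fintype, G₁, G₂,
    v₁, W₁, v₂, W₂, hadj₁, hadj₂, ⟨⟨E, @fun x y => ?_⟩⟩⟩
  show (hajosJoin G₁ G₂ v₁ W₁ v₂ W₂).Adj (E x) (E y) ↔ G.Adj x y
  by_cases hx : x ∈ SA <;> by_cases hy : y ∈ SA <;>
    simp only [hE, Equiv.coe_fn_mk, hf, hx, hy, dite_true, dite_false, hajosJoin,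
      SimpleGraph.fromRel_adj]
  · simp only [Subtype.mk.injEq, Sum.inl.injEq, reduceCtorEq, false_and, and_false,
      exists_false, or_false, exists_and_left, exists_eq_left', hG₁, hv₁, hW₁, ne_eq]
    constructor
    · rintro ⟨hne, h | h⟩
      · rcases h.1.2 with h' | ⟨rfl, rfl⟩ | ⟨rfl, rfl⟩
        · exact h'
        · exact absurd ⟨rfl, rfl⟩ h.2.1
        · exact absurd ⟨rfl, rfl⟩ h.2.2
      · rcases h.1.2 with h' | ⟨rfl, rfl⟩ | ⟨rfl, rfl⟩
        · exact h'.symm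
        · exact absurd ⟨rfl, rfl⟩ h.2.1
        · exact absurd ⟨rfl, rfl⟩ h.2.2
    · intro h
      refine ⟨h.ne, Or.inl ⟨⟨h.ne, Or.inl h⟩, ?_, ?_⟩⟩
      · rintro ⟨rfl, rfl⟩; exact hnv₁ h
      · rintro ⟨rfl, rfl⟩; exact hnv₁ h.symm
  · simp only [Subtype.mk.injEq, Sum.inl.injEq, Sum.inr.injEq, reduceCtorEq, false_and, and_false,
      exists_false, or_false, false_or, exists_and_left, exists_eq_left', hG₁, hG₂, hv₁, hW₁,
      hv₂, hW₂, ne_eq]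
    have hyv : y ≠ v := hxnev y hy
    have hyB : y ∈ B := by
      rcases memB y hy with h | h
      · exact absurd h hyv
      · exact h
    constructor
    · rintro ⟨-, ⟨rfl, ⟨hne', hor⟩, hyw⟩ | ⟨rfl, rfl⟩⟩
      · rcases hor with h' | ⟨-, h'⟩ | ⟨h', -⟩
        · exact h'
        · exact absurd h' hyw
        · exact absurd h' hyv
      · exact hadj
    · intro h
      refine ⟨not_false, ?_⟩
      rcases Set.mem_insert_iff.mp hx with rfl | hxA
      · exact Or.inl ⟨rfl, ⟨h.ne, Or.inl h⟩, fun hh => hnv₂ (hh ▸ h)⟩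
      · exact Or.inr (hcross x hxA y hyB h)
  · simp only [Subtype.mk.injEq, Sum.inl.injEq, Sum.inr.injEq, reduceCtorEq, false_and, and_false,
      exists_false, or_false, false_or, exists_and_left, exists_eq_left', hG₁, hG₂, hv₁, hW₁,
      hv₂, hW₂, ne_eq]
    have hxv : x ≠ v := hxnev x hx
    have hxB : x ∈ B := by
      rcases memB x hx with h | h
      · exact absurd h hxv
      · exact h
    constructor
    · rintro ⟨-, ⟨rfl, ⟨hne', hor⟩, hxw⟩ | ⟨rfl, rfl⟩⟩
      · rcases hor with h' | ⟨-, h'⟩ | ⟨h', -⟩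
        · exact h'.symm
        · exact absurd h' hxw
        · exact absurd h' hxv
      · exact hadj.symm
    · intro h
      refine ⟨not_false, ?_⟩
      rcases Set.mem_insert_iff.mp hy with rfl | hyA
      · exact Or.inl ⟨rfl, ⟨h.symm.ne, Or.inl h.symm⟩, fun hh => hnv₂ (hh ▸ h.symm)⟩
      · exact Or.inr (hcross y hyA x hxB h.symm)
  · simp only [Subtype.mk.injEq, Sum.inl.injEq, Sum.inr.injEq, reduceCtorEq, false_and, and_false,
      exists_false, or_false, false_or, exists_and_left, exists_eq_left', hG₁, hG₂, hv₁, hW₁,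
      hv₂, hW₂, ne_eq]
    have hxv : x ≠ v := hxnev x hx
    have hyv : y ≠ v := hxnev y hy
    constructor
    · rintro ⟨hne, ⟨-, h' | ⟨h', -⟩ | ⟨h', -⟩⟩ | ⟨-, h' | ⟨h', -⟩ | ⟨h', -⟩⟩⟩
      · exact h'
      · exact absurd h' hxv
      · exact absurd h' hyv
      · exact h'.symm
      · exact absurd h' hyv
      · exact absurd h' hxv
    · intro h
      exact ⟨h.ne, Or.inl ⟨h.ne, Or.inl h⟩⟩

end AuxHajos

/-- A critical graph with chromatic number `k+1` (`k ≥ 3`)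
having a separating set consisting of one edge and one vertex is a Hajós join
of two graphs. -/
theorem vertex_edge_separator_hajos {V : Type} [Fintype V]
    (G : SimpleGraph V) (k : ℕ) (hk : 3 ≤ k)
    (hcrit : IsCritical G) (hchi : G.chromaticNumber = (↑(k + 1) : ℕ∞))
    (hsep : ∃ (v : V) (e : Sym2 V), e ∈ G.edgeSet ∧
      numComponents G < numComponents ((G.deleteEdges {e}).induce {v}ᶜ)) :
    ∃ (V₁ V₂ : Type) (_ : Fintype V₁) (_ : Fintype V₂)
      (G₁ : SimpleGraph V₁) (G₂ : SimpleGraph V₂), IsHajosJoin G G₁ G₂ := by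
  classical
  obtain ⟨v, e, he, hlt⟩ := hsep
  induction e using Sym2.ind with
  | _ w₁ w₂ =>
  have hadj : G.Adj w₁ w₂ := he
  have hk0 : 0 < k := by omega
  set G' := (G.deleteEdges {s(w₁, w₂)}).induce ({v}ᶜ : Set V) with hG'
  have hNV : Nonempty V := ⟨w₁⟩
  have hfin : Finite G'.ConnectedComponent := Quot.finite _
  have hne : Nonempty G.ConnectedComponent := ⟨G.connectedComponentMk w₁⟩
  have hfin2 : Finite G.ConnectedComponent := Quot.finite _
  have h1 : 0 < Nat.card G.ConnectedComponent := Nat.card_pos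
  have h2 : 1 < Nat.card G'.ConnectedComponent := by
    have h3 := hlt
    unfold numComponents at h3
    omega
  have hnt : Nontrivial G'.ConnectedComponent := Finite.one_lt_card_iff_nontrivial.mp h2
  set comp : ↥({v}ᶜ : Set V) → G'.ConnectedComponent := G'.connectedComponentMk with hcompdef
  have hcomp : ∀ (a b : ↥({v}ᶜ : Set V)), G.Adj a.1 b.1 → s(a.1, b.1) ≠ s(w₁, w₂) →
      comp a = comp b := by
    intro a b hab hne2
    refine SimpleGraph.ConnectedComponent.sound (SimpleGraph.Adj.reachable ?_)
    show G'.Adj a b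
    rw [hG']
    simp only [SimpleGraph.comap_adj, SimpleGraph.deleteEdges_adj,
      Set.mem_singleton_iff]
    exact ⟨hab, hne2⟩
  set Ac : G'.ConnectedComponent → Set V :=
    fun c => {x : V | ∃ h : x ∈ ({v}ᶜ : Set V), comp ⟨x, h⟩ = c} with hAcdef
  set Bc : G'.ConnectedComponent → Set V :=
    fun c => {x : V | ∃ h : x ∈ ({v}ᶜ : Set V), comp ⟨x, h⟩ ≠ c} with hBcdef
  have hU : ∀ c, Ac c ∪ Bc c = ({v}ᶜ : Set V) := by
    intro c
    ext x
    constructor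
    · rintro (⟨h, -⟩ | ⟨h, -⟩) <;> exact h
    · intro h
      by_cases hc : comp ⟨x, h⟩ = c
      · exact Or.inl ⟨h, hc⟩
      · exact Or.inr ⟨h, hc⟩
  have hD : ∀ c, Ac c ∩ Bc c = ∅ := by
    intro c
    ext x
    simp only [Set.mem_inter_iff, Set.mem_empty_iff_false, iff_false, not_and]
    rintro ⟨h1, hc1⟩ ⟨h2, hc2⟩
    exact hc2 hc1
  have hAne : ∀ c, (Ac c).Nonempty := by
    intro c
    obtain ⟨u, hu⟩ := c.exists_rep
    exact ⟨u.1, u.2, hu⟩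
  have hBne : ∀ c, (Bc c).Nonempty := by
    intro c
    obtain ⟨d, hd⟩ := exists_ne c
    obtain ⟨u, hu⟩ := d.exists_rep
    refine ⟨u.1, u.2, ?_⟩
    exact fun hh => hd (hu.symm.trans hh)
  have hcrossgen : ∀ c, ∀ a ∈ Ac c, ∀ b ∈ Bc c, G.Adj a b → s(a, b) = s(w₁, w₂) := by
    rintro c a ⟨ha, hca⟩ b ⟨hb, hcb⟩ hab
    by_contra hne2
    exact hcb ((hcomp ⟨a, ha⟩ ⟨b, hb⟩ hab hne2).symm.trans hca)
  by_cases hv1 : w₁ = v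
  · exfalso
    obtain ⟨c⟩ := (inferInstance : Nonempty G'.ConnectedComponent)
    refine glue_alpha hcrit hchi hk0 (hU c) (hD c) (hAne c) (hBne c) ?_
    rintro a ⟨ha', hca⟩ b ⟨hb', hcb⟩ hab
    have hs := hcrossgen c a ⟨ha', hca⟩ b ⟨hb', hcb⟩ hab
    rw [Sym2.eq_iff] at hs
    rcases hs with ⟨h1, -⟩ | ⟨-, h2⟩
    · exact Set.mem_compl_singleton_iff.mp ha' (h1.trans hv1)
    · exact Set.mem_compl_singleton_iff.mp hb' (h2.trans hv1)
  by_cases hv2 : w₂ = v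
  · exfalso
    obtain ⟨c⟩ := (inferInstance : Nonempty G'.ConnectedComponent)
    refine glue_alpha hcrit hchi hk0 (hU c) (hD c) (hAne c) (hBne c) ?_
    rintro a ⟨ha', hca⟩ b ⟨hb', hcb⟩ hab
    have hs := hcrossgen c a ⟨ha', hca⟩ b ⟨hb', hcb⟩ hab
    rw [Sym2.eq_iff] at hs
    rcases hs with ⟨-, h2⟩ | ⟨h1, -⟩
    · exact Set.mem_compl_singleton_iff.mp hb' (h2.trans hv2)
    · exact Set.mem_compl_singleton_iff.mp ha' (h1.trans hv2)
  set u₁ : ↥({v}ᶜ : Set V) := ⟨w₁, Set.mem_compl_singleton_iff.mpr hv1⟩ with hu₁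
  set u₂ : ↥({v}ᶜ : Set V) := ⟨w₂, Set.mem_compl_singleton_iff.mpr hv2⟩ with hu₂
  by_cases hsame : comp u₁ = comp u₂
  · exfalso
    obtain ⟨c, hc⟩ := exists_ne (comp u₁)
    refine glue_alpha hcrit hchi hk0 (hU c) (hD c) (hAne c) (hBne c) ?_
    rintro a ⟨ha', hca⟩ b ⟨hb', hcb⟩ hab
    have hs := hcrossgen c a ⟨ha', hca⟩ b ⟨hb', hcb⟩ hab
    rw [Sym2.eq_iff] at hs
    rcases hs with ⟨h1, -⟩ | ⟨h1, -⟩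
    · subst h1
      exact hc hca.symm
    · subst h1
      exact hc ((hsame.trans hca).symm)
  · have hw₁A : w₁ ∈ Ac (comp u₁) := ⟨u₁.2, rfl⟩
    have hw₂B : w₂ ∈ Bc (comp u₁) := ⟨u₂.2, fun hh => hsame hh.symm⟩
    have hcross' : ∀ a ∈ Ac (comp u₁), ∀ b ∈ Bc (comp u₁), G.Adj a b → a = w₁ ∧ b = w₂ := by
      rintro a ⟨ha', hca⟩ b ⟨hb', hcb⟩ hab
      have hs := hcrossgen _ a ⟨ha', hca⟩ b ⟨hb', hcb⟩ hab
      rw [Sym2.eq_iff] at hs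
      rcases hs with ⟨h1, h2⟩ | ⟨h1, h2⟩
      · exact ⟨h1, h2⟩
      · subst h1
        exact absurd hca.symm (fun hh => hsame hh)
    obtain ⟨hn1, hn2⟩ := glue_beta hcrit hchi hk (hU _) (hD _) hw₁A hw₂B hadj hcross'
    exact construct (hU _) (hD _) hw₁A hw₂B hadj hcross' hn1 hn2
end

section
/- Let G be a critical graph with chromatic number k+1 for an integer k ≥ 3, and let F ⊆ E(G) be a separating edge set of G with |F| ≤ k. Then |F| = k and there is an edge cut (X, Y, F) of G such that: (a) every coloring f ∈ 𝒞𝒪_k(G[X]) satisfies |f(X_F)| = 1 and every coloring f ∈ 𝒞𝒪_k(G[Y]) satisfies |f(Y_F)| = k; (b) the graph G₁ obtained from G[X ∪ Y_F] by adding all edges between vertices of Y_F (so that Y_F becomes a clique) is critical with chromatic number k+1; (c) the graph G₂ obtained from G[Y] by adding a new vertex joined to all vertices of Y_F is critical with chromatic number k+1. -/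
open SimpleGraph

section Perm
variable {k : ℕ}

lemma card_eqval_perm (b a : Fin k) :
    (Finset.univ.filter (fun π : Equiv.Perm (Fin k) => π b = a)).card ≤ (k-1).factorial := by
  classical
  -- first: transfer to fixing b via multiplying by swap a b
  have hinj : (Finset.univ.filter (fun π : Equiv.Perm (Fin k) => π b = a)).card ≤
      (Finset.univ.filter (fun π : Equiv.Perm (Fin k) => π b = b)).card := by
    apply Finset.card_le_card_of_injOn (fun π => (Equiv.swap a b) * π)
    · intro π hπ
      simp only [Finset.coe_filter, Set.mem_setOf_eq, Finset.mem_filter, Finset.mem_univ, true_and] at hπ ⊢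
      simp [hπ]
    · intro π _ π' _ h
      exact mul_left_cancel h
  refine hinj.trans ?_
  have h2 : (Finset.univ.filter (fun π : Equiv.Perm (Fin k) => π b = b)).card ≤
      (Finset.univ : Finset (Equiv.Perm {x : Fin k // x ≠ b})).card := by
    apply Finset.card_le_card_of_injOn (fun π =>
      if h : (π : Equiv.Perm (Fin k)) b = b then
        π.subtypePerm (p := fun x => x ≠ b) (fun x => by
          constructor
          · intro hx hc
            exact hx (by rw [hc]; exact h)
          · intro hx hc
            exact hx (π.injective (hc.trans h.symm))) else 1)
    · intro π _; exact Finset.mem_univ _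
    · intro π hπ π' hπ' hee
      simp only [Finset.coe_filter, Set.mem_setOf_eq, Finset.mem_univ, true_and] at hπ hπ'
      simp only [dif_pos hπ, dif_pos hπ'] at hee
      apply Equiv.ext
      intro x
      by_cases hx : x = b
      · subst hx; rw [hπ, hπ']
      · have := congrArg (fun σ : Equiv.Perm {x : Fin k // x ≠ b} => (σ ⟨x, hx⟩ : Fin k)) hee
        simpa using this
  refine h2.trans ?_
  rw [Finset.card_univ, Fintype.card_perm]
  have : Fintype.card {x : Fin k // x ≠ b} = k - 1 := by
    simp [Fintype.card_subtype_compl]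
  rw [this]

end Perm

section Cover
variable {k : ℕ}

lemma exists_perm_two {b b' a a' : Fin k} (hb : b ≠ b') (ha : a ≠ a') :
    ∃ π : Equiv.Perm (Fin k), π b = a ∧ π b' = a' := by
  classical
  set π₁ := Equiv.swap b a with hπ₁
  have h1 : π₁ b = a := Equiv.swap_apply_left b a
  refine ⟨Equiv.setValue π₁ b' a', ?_, Equiv.setValue_eq π₁ b' a'⟩
  have hbb : b ≠ b' := hb
  have hbs : b ≠ π₁.symm a' := by
    intro h
    apply ha
    rw [h, Equiv.apply_symm_apply] at h1
    exact h1.symm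
  simp only [Equiv.setValue, Equiv.trans_apply]
  rw [Equiv.swap_apply_of_ne_of_ne hbb hbs, h1]

lemma cover_lemma (hk : 3 ≤ k) (D : Finset (Fin k × Fin k))
    (hcov : ∀ π : Equiv.Perm (Fin k), ∃ d ∈ D, π d.1 = d.2)
    (hcard : D.card ≤ k) :
    D.card = k ∧
    ((∃ a, (∀ d ∈ D, d.2 = a) ∧ (∀ c, ∃ d ∈ D, d.1 = c)) ∨
     (∃ b, (∀ d ∈ D, d.1 = b) ∧ (∀ c, ∃ d ∈ D, d.2 = c))) := by
  classical
  set A : Fin k × Fin k → Finset (Equiv.Perm (Fin k)) :=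
    fun d => Finset.univ.filter (fun π => π d.1 = d.2) with hA
  have hAcard : ∀ d, (A d).card ≤ (k-1).factorial := fun d => card_eqval_perm d.1 d.2
  have hm1 : 1 ≤ (k-1).factorial := Nat.one_le_iff_ne_zero.mpr (Nat.factorial_ne_zero _)
  have hktot : Fintype.card (Equiv.Perm (Fin k)) = k.factorial := by
    rw [Fintype.card_perm, Fintype.card_fin]
  have hkfac : k.factorial = k * (k-1).factorial := by
    have h1 : k - 1 + 1 = k := by omega
    calc k.factorial = (k - 1 + 1).factorial := by rw [h1]
    _ = (k - 1 + 1) * (k - 1).factorial := Nat.factorial_succ _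
    _ = k * (k-1).factorial := by rw [h1]
  -- lower bound on D.card
  have hsub : (Finset.univ : Finset (Equiv.Perm (Fin k))) ⊆ D.biUnion A := by
    intro π _
    obtain ⟨d, hd, hfix⟩ := hcov π
    exact Finset.mem_biUnion.mpr ⟨d, hd, by simp [hA, hfix]⟩
  have hge : k ≤ D.card := by
    have h1 : k.factorial ≤ (D.biUnion A).card := by
      rw [← hktot, ← Finset.card_univ]
      exact Finset.card_le_card hsub
    have h2 : (D.biUnion A).card ≤ D.card * (k-1).factorial :=
      (Finset.card_biUnion_le).trans (by
        calc (∑ d ∈ D, (A d).card) ≤ ∑ _d ∈ D, (k-1).factorial :=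
              Finset.sum_le_sum (fun d _ => hAcard d)
        _ = D.card * (k-1).factorial := by rw [Finset.sum_const, smul_eq_mul])
    have := h1.trans h2
    rw [hkfac] at this
    exact Nat.le_of_mul_le_mul_right this (by omega)
  have hDcard : D.card = k := le_antisymm hcard hge
  refine ⟨hDcard, ?_⟩
  -- pairwise sharing of a coordinate
  have hshare : ∀ d1 ∈ D, ∀ d2 ∈ D, d1.1 = d2.1 ∨ d1.2 = d2.2 := by
    intro d1 hd1 d2 hd2
    by_contra hcon
    push_neg at hcon
    obtain ⟨hb, ha⟩ := hcon
    obtain ⟨π₀, hπ₀1, hπ₀2⟩ := exists_perm_two hb ha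
    have hπ₀A1 : π₀ ∈ A d1 := by simp [hA, hπ₀1]
    have hπ₀A2 : π₀ ∈ A d2 := by simp [hA, hπ₀2]
    have hd12 : d1 ≠ d2 := fun h => hb (by rw [h])
    have hsub2 : (Finset.univ : Finset (Equiv.Perm (Fin k))) ⊆
        (D.erase d1).biUnion A ∪ (A d1).erase π₀ := by
      intro π _
      obtain ⟨d, hd, hfix⟩ := hcov π
      rcases eq_or_ne d d1 with rfl | hne
      · rcases eq_or_ne π π₀ with rfl | hne2
        · exact Finset.mem_union_left _ (Finset.mem_biUnion.mpr
            ⟨d2, Finset.mem_erase.mpr ⟨hd12.symm, hd2⟩, hπ₀A2⟩)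
        · exact Finset.mem_union_right _ (Finset.mem_erase.mpr ⟨hne2, by simp [hA, hfix]⟩)
      · exact Finset.mem_union_left _ (Finset.mem_biUnion.mpr ⟨d, Finset.mem_erase.mpr ⟨hne, hd⟩,
          by simp [hA, hfix]⟩)
    have hc1 : k.factorial ≤ ((D.erase d1).biUnion A ∪ (A d1).erase π₀).card := by
      rw [← hktot, ← Finset.card_univ]
      exact Finset.card_le_card hsub2
    have hc2 : ((D.erase d1).biUnion A ∪ (A d1).erase π₀).card ≤
        (k - 1) * (k-1).factorial + ((k-1).factorial - 1) := by
      refine (Finset.card_union_le _ _).trans (Nat.add_le_add ?_ ?_)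
      · refine (Finset.card_biUnion_le).trans ?_
        calc (∑ d ∈ D.erase d1, (A d).card) ≤ ∑ _d ∈ D.erase d1, (k-1).factorial :=
              Finset.sum_le_sum (fun d _ => hAcard d)
        _ = (D.erase d1).card * (k-1).factorial := by rw [Finset.sum_const, smul_eq_mul]
        _ = (k - 1) * (k-1).factorial := by
              rw [Finset.card_erase_of_mem hd1, hDcard]
      · rw [Finset.card_erase_of_mem hπ₀A1]
        exact Nat.sub_le_sub_right (hAcard d1) 1
    have hfin := hc1.trans hc2
    rw [hkfac] at hfin
    have hexp : (k - 1) * (k-1).factorial + (k-1).factorial = k * (k-1).factorial := by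
      have : k - 1 + 1 = k := by omega
      calc (k - 1) * (k-1).factorial + (k-1).factorial = (k - 1 + 1) * (k-1).factorial := by ring
      _ = k * (k-1).factorial := by rw [this]
    omega
  -- structure
  have hDne : D.Nonempty := Finset.card_pos.mp (by omega)
  obtain ⟨d0, hd0⟩ := hDne
  by_cases hrow : ∀ d ∈ D, d.1 = d0.1
  · refine Or.inr ⟨d0.1, hrow, ?_⟩
    intro c
    obtain ⟨d, hd, hfix⟩ := hcov (Equiv.swap d0.1 c)
    refine ⟨d, hd, ?_⟩
    rw [hrow d hd, Equiv.swap_apply_left] at hfix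
    exact hfix.symm
  · push_neg at hrow
    obtain ⟨d1, hd1, hne1⟩ := hrow
    have hcol : d1.2 = d0.2 := (hshare d1 hd1 d0 hd0).resolve_left hne1
    refine Or.inl ⟨d0.2, ?_, ?_⟩
    · intro d hd
      rcases hshare d hd d0 hd0 with h | h
      · rcases hshare d hd d1 hd1 with h' | h'
        · exact absurd (h' ▸ h) hne1
        · rw [h', hcol]
      · exact h
    · intro c
      obtain ⟨d, hd, hfix⟩ := hcov (Equiv.swap c d0.2)
      refine ⟨d, hd, ?_⟩
      have hd2 : d.2 = d0.2 := by
        rcases hshare d hd d0 hd0 with h | h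
        · rcases hshare d hd d1 hd1 with h' | h'
          · exact absurd (h' ▸ h) hne1
          · rw [h', hcol]
        · exact h
      rw [hd2] at hfix
      have : (Equiv.swap c d0.2) d.1 = (Equiv.swap c d0.2) c := by
        rw [hfix, Equiv.swap_apply_left]
      exact (Equiv.swap c d0.2).injective this
  
end Cover

section GraphBasics
variable {V : Type} [Fintype V] {G : SimpleGraph V} {k : ℕ}

lemma colorable_of_hom {W W' : Type} {G₁ : SimpleGraph W} {G₂ : SimpleGraph W'}
    (f : G₁ →g G₂) (h : G₂.Colorable k) : G₁.Colorable k :=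
  ⟨h.some.comp f⟩

lemma not_colorable_of_chi (hchi : G.chromaticNumber = (↑(k + 1) : ℕ∞)) :
    ¬ G.Colorable k := by
  intro h
  have := chromaticNumber_le_iff_colorable.mpr h
  rw [hchi] at this
  exact absurd (Nat.cast_le.mp this) (by omega)

lemma colorable_of_lt_chi {W : Type} {H : SimpleGraph W} (h : H.chromaticNumber < (↑(k + 1) : ℕ∞)) :
    H.Colorable k := by
  rw [← chromaticNumber_le_iff_colorable]
  have hne : H.chromaticNumber ≠ ⊤ := (h.trans_le le_top).ne
  lift H.chromaticNumber to ℕ using hne with n hn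
  exact_mod_cast Nat.lt_succ_iff.mp (by exact_mod_cast h)

lemma colorable_induce_of_ne_univ (hcrit : IsCritical G)
    (hchi : G.chromaticNumber = (↑(k + 1) : ℕ∞)) {S : Set V} (hS : S ≠ Set.univ) :
    (G.induce S).Colorable k := by
  set H : G.Subgraph := (⊤ : G.Subgraph).induce S with hH
  have hne : H ≠ ⊤ := by
    intro h
    apply hS
    have : H.verts = Set.univ := by rw [h]; rfl
    simpa [hH] using this
  have hcol : H.coe.Colorable k := colorable_of_lt_chi (hchi ▸ hcrit H hne)
  refine colorable_of_hom ⟨fun v => (⟨v.1, v.2⟩ : H.verts), ?_⟩ hcol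
  intro a b hab
  exact ⟨a.2, b.2, hab⟩

lemma colorable_deleteEdges_of_mem (hcrit : IsCritical G)
    (hchi : G.chromaticNumber = (↑(k + 1) : ℕ∞)) {e : Sym2 V} (he : e ∈ G.edgeSet) :
    (G.deleteEdges {e}).Colorable k := by
  set H : G.Subgraph := (⊤ : G.Subgraph).deleteEdges {e} with hH
  have hne : H ≠ ⊤ := by
    intro h
    induction e with
    | _ u v =>
      have : H.Adj u v := by rw [h]; exact he
      rw [hH, SimpleGraph.Subgraph.deleteEdges_adj] at this
      exact this.2 rfl
  have hcol : H.coe.Colorable k := colorable_of_lt_chi (hchi ▸ hcrit H hne)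
  refine colorable_of_hom ⟨fun v => (⟨v, trivial⟩ : H.verts), ?_⟩ hcol
  intro a b hab
  rw [SimpleGraph.deleteEdges_adj] at hab
  exact (SimpleGraph.Subgraph.deleteEdges_adj _ _ _).mpr ⟨hab.1, hab.2⟩

lemma exists_sep_part {F : Set (Sym2 V)} (hF : IsSepEdgeSet G F) :
    ∃ S : Set V, S.Nonempty ∧ S ≠ Set.univ ∧
      ∀ x y, x ∈ S → y ∉ S → G.Adj x y → s(x, y) ∈ F := by
  classical
  haveI : Finite (G.deleteEdges F).ConnectedComponent :=
    Finite.of_surjective (G.deleteEdges F).connectedComponentMk (Quot.exists_rep)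
  haveI : Finite G.ConnectedComponent :=
    Finite.of_surjective G.connectedComponentMk (Quot.exists_rep)
  unfold IsSepEdgeSet numComponents at hF
  have h2 : 2 ≤ Nat.card (G.deleteEdges F).ConnectedComponent := by
    by_cases hV : Nonempty V
    · haveI : Nonempty G.ConnectedComponent := ⟨G.connectedComponentMk hV.some⟩
      have : 0 < Nat.card G.ConnectedComponent := Nat.card_pos
      omega
    · have hIE : IsEmpty (G.deleteEdges F).ConnectedComponent := by
        constructor; intro C
        exact C.ind (fun v => absurd ⟨v⟩ hV)
      have := Nat.card_of_isEmpty (α := (G.deleteEdges F).ConnectedComponent)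
      omega
  haveI : Fintype (G.deleteEdges F).ConnectedComponent := Fintype.ofFinite _
  rw [Nat.card_eq_fintype_card] at h2
  obtain ⟨C₁, C₂, hC⟩ := Fintype.exists_pair_of_one_lt_card (α := (G.deleteEdges F).ConnectedComponent) (by omega)
  obtain ⟨u, rfl⟩ := C₁.exists_rep
  obtain ⟨v, rfl⟩ := C₂.exists_rep
  refine ⟨{w | (G.deleteEdges F).Reachable u w}, ⟨u, Reachable.refl u⟩, ?_, ?_⟩
  · intro h
    apply hC
    exact SimpleGraph.ConnectedComponent.sound (by
      have : v ∈ {w | (G.deleteEdges F).Reachable u w} := h ▸ Set.mem_univ v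
      exact this)
  · intro x y hx hy hadj
    by_contra hne
    apply hy
    exact hx.trans (SimpleGraph.Adj.reachable (by
      rw [SimpleGraph.deleteEdges_adj]
      exact ⟨hadj, hne⟩))
end GraphBasics

section Cells
variable {V : Type} [Fintype V] {G : SimpleGraph V} {k : ℕ} {F : Set (Sym2 V)} {S : Set V}

/-- The set of color pairs `(g y, f x)` over crossing edges `xy`. -/
def cells (G : SimpleGraph V) (S : Set V) (f : (G.induce S).Coloring (Fin k))
    (g : (G.induce Sᶜ).Coloring (Fin k)) : Set (Fin k × Fin k) :=
  {p | ∃ x y, ∃ (hx : x ∈ S) (hy : y ∈ Sᶜ), G.Adj x y ∧ p = (g ⟨y, hy⟩, f ⟨x, hx⟩)}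

lemma cells_cover (hnc : ¬ G.Colorable k) (f : (G.induce S).Coloring (Fin k))
    (g : (G.induce Sᶜ).Coloring (Fin k)) (π : Equiv.Perm (Fin k)) :
    ∃ p ∈ cells G S f g, π p.1 = p.2 := by
  classical
  by_contra hcon
  push_neg at hcon
  apply hnc
  refine ⟨SimpleGraph.Coloring.mk
    (fun v => if hv : v ∈ S then f ⟨v, hv⟩ else π (g ⟨v, hv⟩)) ?_⟩
  intro u w hadj
  beta_reduce
  by_cases hu : u ∈ S <;> by_cases hw : w ∈ S
  · rw [dif_pos hu, dif_pos hw]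
    exact f.valid hadj
  · rw [dif_pos hu, dif_neg hw]
    have hcell : (g ⟨w, hw⟩, f ⟨u, hu⟩) ∈ cells G S f g := ⟨u, w, hu, hw, hadj, rfl⟩
    intro h
    exact hcon _ hcell h.symm
  · rw [dif_neg hu, dif_pos hw]
    have hcell : (g ⟨u, hu⟩, f ⟨w, hw⟩) ∈ cells G S f g := ⟨w, u, hw, hu, hadj.symm, rfl⟩
    intro h
    exact hcon _ hcell h
  · rw [dif_neg hu, dif_neg hw]
    intro h
    exact g.valid (by exact hadj) (π.injective h)

lemma cells_subset_image (hk : 3 ≤ k) (f : (G.induce S).Coloring (Fin k))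
    (g : (G.induce Sᶜ).Coloring (Fin k)) :
    ∃ Φ : Sym2 V → Fin k × Fin k, cells G S f g ⊆ Φ '' edgeBoundary G S := by
  classical
  refine ⟨fun e =>
    if h : ∃ p : V × V, p.1 ∈ S ∧ p.2 ∈ Sᶜ ∧ G.Adj p.1 p.2 ∧ e = s(p.1, p.2) then
      (g ⟨h.choose.2, h.choose_spec.2.1⟩, f ⟨h.choose.1, h.choose_spec.1⟩)
    else ((⟨0, by omega⟩ : Fin k), (⟨0, by omega⟩ : Fin k)), ?_⟩
  rintro p ⟨x, y, hx, hy, hadj, rfl⟩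
  refine ⟨s(x, y), ⟨hadj, x, y, rfl, hx, hy⟩, ?_⟩
  have hex : ∃ p : V × V, p.1 ∈ S ∧ p.2 ∈ Sᶜ ∧ G.Adj p.1 p.2 ∧ s(x,y) = s(p.1, p.2) :=
    ⟨(x, y), hx, hy, hadj, rfl⟩
  beta_reduce
  rw [dif_pos hex]
  obtain ⟨h1, h2, _, h4⟩ := hex.choose_spec
  rcases Sym2.eq_iff.mp h4 with ⟨hx1, hy1⟩ | ⟨hx1, hy1⟩
  · have e1 : (⟨hex.choose.2, h2⟩ : ↥Sᶜ) = ⟨y, hy⟩ := Subtype.ext hy1.symm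
    have e2 : (⟨hex.choose.1, h1⟩ : ↥S) = ⟨x, hx⟩ := Subtype.ext hx1.symm
    show ((g ⟨hex.choose.2, h2⟩, f ⟨hex.choose.1, h1⟩) : Fin k × Fin k) = _
    rw [e1, e2]
  · exact absurd (hy1 ▸ h1) hy

lemma key_dichotomy (hk : 3 ≤ k) (hcrit : IsCritical G)
    (hchi : G.chromaticNumber = (↑(k + 1) : ℕ∞)) (hFcard : F.ncard ≤ k)
    (hSne : S.Nonempty) (hSnu : S ≠ Set.univ)
    (hcross : ∀ x y, x ∈ S → y ∉ S → G.Adj x y → s(x, y) ∈ F) :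
    F = edgeBoundary G S ∧ F.ncard = k ∧
    ∀ (f : (G.induce S).Coloring (Fin k)) (g : (G.induce Sᶜ).Coloring (Fin k)),
      (((⇑f '' {x : ↥S | x.1 ∈ cutVerts F S}).ncard = 1 ∧
        (⇑g '' {y : ↥Sᶜ | y.1 ∈ cutVerts F Sᶜ}).ncard = k) ∨
       ((⇑g '' {y : ↥Sᶜ | y.1 ∈ cutVerts F Sᶜ}).ncard = 1 ∧
        (⇑f '' {x : ↥S | x.1 ∈ cutVerts F S}).ncard = k)) := by
  classical
  have hnc : ¬ G.Colorable k := not_colorable_of_chi hchi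
  have hebF : edgeBoundary G S ⊆ F := by
    rintro e ⟨he, x, y, rfl, hx, hy⟩
    exact hcross x y hx hy he
  have hFfin : F.Finite := Set.toFinite F
  have hebfin : (edgeBoundary G S).Finite := Set.toFinite _
  -- the per-pair analysis
  have main : ∀ (f : (G.induce S).Coloring (Fin k)) (g : (G.induce Sᶜ).Coloring (Fin k)),
      (cells G S f g).ncard = k ∧ k ≤ (edgeBoundary G S).ncard ∧
      (((⇑f '' {x : ↥S | x.1 ∈ cutVerts F S}).ncard = 1 ∧
        (⇑g '' {y : ↥Sᶜ | y.1 ∈ cutVerts F Sᶜ}).ncard = k) ∨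
       ((⇑g '' {y : ↥Sᶜ | y.1 ∈ cutVerts F Sᶜ}).ncard = 1 ∧
        (⇑f '' {x : ↥S | x.1 ∈ cutVerts F S}).ncard = k)) := by
    intro f g
    obtain ⟨Φ, hΦ⟩ := cells_subset_image hk f g
    have hcellfin : (cells G S f g).Finite := Set.toFinite _
    have hcells_le : (cells G S f g).ncard ≤ (edgeBoundary G S).ncard :=
      (Set.ncard_le_ncard hΦ (hebfin.image Φ)).trans (Set.ncard_image_le hebfin)
    have hebcard : (edgeBoundary G S).ncard ≤ k :=
      (Set.ncard_le_ncard hebF hFfin).trans hFcard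
    set D : Finset (Fin k × Fin k) := hcellfin.toFinset with hD
    have hDcells : ∀ d, d ∈ D ↔ d ∈ cells G S f g := fun d => Set.Finite.mem_toFinset _
    have hDcard : D.card = (cells G S f g).ncard :=
      (Set.ncard_eq_toFinset_card _ hcellfin).symm
    have hcov : ∀ π : Equiv.Perm (Fin k), ∃ d ∈ D, π d.1 = d.2 := by
      intro π
      obtain ⟨p, hp, hfix⟩ := cells_cover hnc f g π
      exact ⟨p, (hDcells p).mpr hp, hfix⟩
    obtain ⟨hDk, hstruct⟩ := cover_lemma hk D hcov
      (by rw [hDcard]; exact hcells_le.trans hebcard)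
    have hcellsk : (cells G S f g).ncard = k := by rw [← hDcard, hDk]
    refine ⟨hcellsk, by omega, ?_⟩
    -- cut verts facts
    have hFeb : F = edgeBoundary G S := by
      symm
      exact Set.eq_of_subset_of_ncard_le hebF (by omega) hFfin
    rcases hstruct with ⟨a, hcol, honto⟩ | ⟨b, hrow, honto⟩
    · -- column case: f constant = a on X_F, g onto
      left
      constructor
      · rw [Set.ncard_eq_one]
        refine ⟨a, Set.Subset.antisymm ?_ ?_⟩
        · rintro c ⟨x', hx', rfl⟩
          obtain ⟨hxS, e, heF, hxe⟩ := hx'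
          obtain ⟨he, u, w, rfl, hu, hw⟩ := hFeb ▸ heF
          have hadj : G.Adj u w := he
          rcases Sym2.mem_iff.mp hxe with h | h
          · have hcell : ((g ⟨w, hw⟩, f ⟨u, hu⟩) : Fin k × Fin k) ∈ D :=
              (hDcells _).mpr ⟨u, w, hu, hw, hadj, rfl⟩
            have := hcol _ hcell
            simp only at this
            rw [Set.mem_singleton_iff, show x' = (⟨u, hu⟩ : ↥S) from Subtype.ext h, this]
          · exact absurd (h ▸ hxS) hw
        · rintro c rfl
          have hDne : D.Nonempty := Finset.card_pos.mp (by omega)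
          obtain ⟨d0, hd0⟩ := hDne
          obtain ⟨x, y, hx, hy, hadj, hd0eq⟩ := (hDcells _).mp hd0
          refine ⟨⟨x, hx⟩, ⟨hx, s(x, y), hcross x y hx hy hadj, Sym2.mem_mk_left x y⟩, ?_⟩
          have := hcol _ hd0
          rw [hd0eq] at this
          simpa using this
      · have himg : ⇑g '' {y : ↥Sᶜ | y.1 ∈ cutVerts F Sᶜ} = Set.univ := by
          refine Set.eq_univ_of_forall ?_
          intro c
          obtain ⟨d, hd, hd1⟩ := honto c
          obtain ⟨x, y, hx, hy, hadj, hdeq⟩ := (hDcells _).mp hd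
          refine ⟨⟨y, hy⟩, ⟨hy, s(x, y), hcross x y hx hy hadj, Sym2.mem_mk_right x y⟩, ?_⟩
          rw [hdeq] at hd1
          simpa using hd1
        rw [himg, Set.ncard_univ, Nat.card_eq_fintype_card, Fintype.card_fin]
    · -- row case: g constant = b on Y_F, f onto
      right
      constructor
      · rw [Set.ncard_eq_one]
        refine ⟨b, Set.Subset.antisymm ?_ ?_⟩
        · rintro c ⟨y', hy', rfl⟩
          obtain ⟨hyS, e, heF, hye⟩ := hy'
          obtain ⟨he, u, w, rfl, hu, hw⟩ := hFeb ▸ heF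
          have hadj : G.Adj u w := he
          rcases Sym2.mem_iff.mp hye with h | h
          · exact absurd (h ▸ hu) hyS
          · have hww : w ∈ Sᶜ := hw
            have hcell : ((g ⟨w, hww⟩, f ⟨u, hu⟩) : Fin k × Fin k) ∈ D :=
              (hDcells _).mpr ⟨u, w, hu, hww, hadj, rfl⟩
            have := hrow _ hcell
            simp only at this
            rw [Set.mem_singleton_iff, show y' = (⟨w, hww⟩ : ↥Sᶜ) from Subtype.ext h, this]
        · rintro c rfl
          have hDne : D.Nonempty := Finset.card_pos.mp (by omega)
          obtain ⟨d0, hd0⟩ := hDne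
          obtain ⟨x, y, hx, hy, hadj, hd0eq⟩ := (hDcells _).mp hd0
          refine ⟨⟨y, hy⟩, ⟨hy, s(x, y), hcross x y hx hy hadj, Sym2.mem_mk_right x y⟩, ?_⟩
          have := hrow _ hd0
          rw [hd0eq] at this
          simpa using this
      · have himg : ⇑f '' {x : ↥S | x.1 ∈ cutVerts F S} = Set.univ := by
          refine Set.eq_univ_of_forall ?_
          intro c
          obtain ⟨d, hd, hd2⟩ := honto c
          obtain ⟨x, y, hx, hy, hadj, hdeq⟩ := (hDcells _).mp hd
          refine ⟨⟨x, hx⟩, ⟨hx, s(x, y), hcross x y hx hy hadj, Sym2.mem_mk_left x y⟩, ?_⟩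
          rw [hdeq] at hd2
          simpa using hd2
        rw [himg, Set.ncard_univ, Nat.card_eq_fintype_card, Fintype.card_fin]
  -- colorings exist on both sides
  have hScnu : Sᶜ ≠ Set.univ := by
    intro h
    obtain ⟨x, hx⟩ := hSne
    have : x ∈ Sᶜ := h ▸ Set.mem_univ x
    exact this hx
  obtain ⟨f₀⟩ := colorable_induce_of_ne_univ hcrit hchi hSnu
  obtain ⟨g₀⟩ := colorable_induce_of_ne_univ hcrit hchi hScnu
  obtain ⟨hc0, hle0, _⟩ := main f₀ g₀
  have hFeb : F = edgeBoundary G S := by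
    symm
    refine Set.eq_of_subset_of_ncard_le hebF ?_ hFfin
    omega
  have hebcard : (edgeBoundary G S).ncard ≤ k :=
    (Set.ncard_le_ncard hebF hFfin).trans hFcard
  refine ⟨hFeb, by rw [hFeb]; omega, fun f g => (main f g).2.2⟩
end Cells

section Orientation
variable {V : Type} [Fintype V] {G : SimpleGraph V} {k : ℕ} {F : Set (Sym2 V)}

lemma exists_X_package (hk : 3 ≤ k) (hcrit : IsCritical G)
    (hchi : G.chromaticNumber = (↑(k + 1) : ℕ∞)) (hFcard : F.ncard ≤ k)
    {T : Set V} (hTne : T.Nonempty) (hTnu : T ≠ Set.univ)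
    (hcross : ∀ x y, x ∈ T → y ∉ T → G.Adj x y → s(x, y) ∈ F)
    (f₁ : (G.induce T).Coloring (Fin k))
    (hf₁ : (⇑f₁ '' {x : ↥T | x.1 ∈ cutVerts F T}).ncard = 1) :
    F = edgeBoundary G T ∧ F.ncard = k ∧
    (∀ f : (G.induce T).Coloring (Fin k),
      (⇑f '' {x : ↥T | x.1 ∈ cutVerts F T}).ncard = 1) ∧
    (∀ g : (G.induce Tᶜ).Coloring (Fin k),
      (⇑g '' {y : ↥Tᶜ | y.1 ∈ cutVerts F Tᶜ}).ncard = k) := by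
  obtain ⟨hFeb, hFk, dich⟩ := key_dichotomy hk hcrit hchi hFcard hTne hTnu hcross
  have hTcnu : Tᶜ ≠ Set.univ := by
    intro h
    obtain ⟨x, hx⟩ := hTne
    exact (h ▸ Set.mem_univ x : x ∈ Tᶜ) hx
  obtain ⟨g₁⟩ := colorable_induce_of_ne_univ hcrit hchi hTcnu
  have hQg₁ : (⇑g₁ '' {y : ↥Tᶜ | y.1 ∈ cutVerts F Tᶜ}).ncard = k := by
    rcases dich f₁ g₁ with ⟨_, h⟩ | ⟨_, h⟩
    · exact h
    · omega
  refine ⟨hFeb, hFk, ?_, ?_⟩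
  · intro f
    rcases dich f g₁ with ⟨h, _⟩ | ⟨h, _⟩
    · exact h
    · omega
  · intro g
    rcases dich f₁ g with ⟨_, h⟩ | ⟨_, h⟩
    · exact h
    · omega

lemma exists_X (hk : 3 ≤ k) (hcrit : IsCritical G)
    (hchi : G.chromaticNumber = (↑(k + 1) : ℕ∞)) (hF : IsSepEdgeSet G F)
    (hFcard : F.ncard ≤ k) :
    ∃ X : Set V, X.Nonempty ∧ X ≠ Set.univ ∧
    F = edgeBoundary G X ∧ F.ncard = k ∧
    (∀ f : (G.induce X).Coloring (Fin k),
      (⇑f '' {x : ↥X | x.1 ∈ cutVerts F X}).ncard = 1) ∧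
    (∀ g : (G.induce Xᶜ).Coloring (Fin k),
      (⇑g '' {y : ↥Xᶜ | y.1 ∈ cutVerts F Xᶜ}).ncard = k) := by
  obtain ⟨S, hSne, hSnu, hcross⟩ := exists_sep_part hF
  have hScne : Sᶜ.Nonempty := Set.nonempty_compl.mpr hSnu
  have hScnu : Sᶜ ≠ Set.univ := by
    intro h
    obtain ⟨x, hx⟩ := hSne
    exact (h ▸ Set.mem_univ x : x ∈ Sᶜ) hx
  have hcross' : ∀ x y, x ∈ Sᶜ → y ∉ Sᶜ → G.Adj x y → s(x, y) ∈ F := by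
    intro x y hx hy hadj
    rw [Sym2.eq_swap]
    exact hcross y x (Set.not_notMem.mp hy) hx hadj.symm
  obtain ⟨hFeb, hFk, dich⟩ := key_dichotomy hk hcrit hchi hFcard hSne hSnu hcross
  obtain ⟨f₀⟩ := colorable_induce_of_ne_univ hcrit hchi hSnu
  obtain ⟨g₀⟩ := colorable_induce_of_ne_univ hcrit hchi hScnu
  rcases dich f₀ g₀ with ⟨hP, _⟩ | ⟨hP, _⟩
  · obtain ⟨h1, h2, h3, h4⟩ := exists_X_package hk hcrit hchi hFcard hSne hSnu hcross f₀ hP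
    exact ⟨S, hSne, hSnu, h1, h2, h3, h4⟩
  · obtain ⟨h1, h2, h3, h4⟩ := exists_X_package hk hcrit hchi hFcard hScne hScnu hcross' g₀ hP
    exact ⟨Sᶜ, hScne, hScnu, h1, h2, h3, h4⟩
end Orientation

section CritHelpers
variable {V : Type} [Fintype V] {G : SimpleGraph V} {k : ℕ}

lemma chromaticNumber_eq_succ {W' : Type} {K : SimpleGraph W'}
    (h1 : ¬ K.Colorable k) (h2 : K.Colorable (k + 1)) :
    K.chromaticNumber = (↑(k + 1) : ℕ∞) := by
  have hle : K.chromaticNumber ≤ (↑(k+1) : ℕ∞) := chromaticNumber_le_iff_colorable.mpr h2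
  have hlt : (↑k : ℕ∞) < K.chromaticNumber := by
    by_contra hcon
    push_neg at hcon
    exact h1 (chromaticNumber_le_iff_colorable.mp hcon)
  refine le_antisymm hle ?_
  rw [show ((↑(k+1) : ℕ∞)) = (↑k : ℕ∞) + 1 by push_cast; ring]
  exact (ENat.add_one_le_iff (ENat.coe_ne_top k)).mpr hlt

lemma crit_of_edge_colorable {W' : Type} {K : SimpleGraph W'}
    (hchiK : K.chromaticNumber = (↑(k + 1) : ℕ∞))
    (hiso : ∀ a, ∃ b, K.Adj a b)
    (hedge : ∀ e ∈ K.edgeSet, (K.deleteEdges {e}).Colorable k) :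
    IsCritical K := by
  intro H hne
  rw [hchiK]
  have hcol : H.coe.Colorable k := by
    obtain ⟨e, heK, heH⟩ : ∃ e ∈ K.edgeSet, e ∉ H.edgeSet := by
      by_contra hcon
      push_neg at hcon
      apply hne
      have hadj : ∀ a b, H.Adj a b ↔ K.Adj a b := by
        intro a b
        constructor
        · exact fun h => H.adj_sub h
        · intro h
          exact SimpleGraph.Subgraph.mem_edgeSet.mp (hcon _ ((SimpleGraph.mem_edgeSet _).mpr h))
      have hverts : H.verts = Set.univ := by
        refine Set.eq_univ_of_forall ?_
        intro a
        obtain ⟨b, hb⟩ := hiso a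
        exact H.edge_vert ((hadj a b).mpr hb)
      ext a b
      · simp [hverts]
      · simp [hadj, SimpleGraph.Subgraph.top_adj]
    refine colorable_of_hom ⟨fun v => v.1, ?_⟩ (hedge e heK)
    intro a b hab
    rw [SimpleGraph.deleteEdges_adj]
    refine ⟨H.adj_sub hab, ?_⟩
    intro hcon
    rw [Set.mem_singleton_iff] at hcon
    exact heH (hcon ▸ SimpleGraph.Subgraph.mem_edgeSet.mpr hab)
  calc H.coe.chromaticNumber ≤ (↑k : ℕ∞) := chromaticNumber_le_iff_colorable.mpr hcol
  _ < (↑(k+1) : ℕ∞) := by exact_mod_cast Nat.lt_succ_self k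

lemma image_full {α : Type} {s : Set α} {g : α → Fin k}
    (h : (g '' s).ncard = k) : ∀ c, ∃ y ∈ s, g y = c := by
  have himg : g '' s = Set.univ := by
    refine Set.eq_of_subset_of_ncard_le (Set.subset_univ _) ?_ (Set.toFinite _)
    rw [Set.ncard_univ, Nat.card_eq_fintype_card, Fintype.card_fin, h]
  intro c
  have : c ∈ g '' s := himg ▸ Set.mem_univ c
  obtain ⟨y, hy, hgy⟩ := this
  exact ⟨y, hy, hgy⟩

lemma G_no_isolated (hcrit : IsCritical G) (hk : 1 ≤ k)
    (hchi : G.chromaticNumber = (↑(k + 1) : ℕ∞)) (v : V) : ∃ u, G.Adj v u := by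
  classical
  by_contra hcon
  push_neg at hcon
  apply not_colorable_of_chi hchi
  have hne : ({v}ᶜ : Set V) ≠ Set.univ := by
    intro h
    exact ((h ▸ Set.mem_univ v) : v ∈ ({v}ᶜ : Set V)) rfl
  obtain ⟨f⟩ := colorable_induce_of_ne_univ hcrit hchi hne
  refine ⟨SimpleGraph.Coloring.mk
    (fun w => if h : w = v then (⟨0, by omega⟩ : Fin k) else f ⟨w, h⟩) ?_⟩
  intro a b hab
  beta_reduce
  have ha : a ≠ v := fun h => hcon b (h ▸ hab)
  have hb : b ≠ v := fun h => hcon a (h ▸ hab.symm)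
  rw [dif_neg ha, dif_neg hb]
  exact f.valid hab

lemma restrict_coloring {S' : Set V} {e' : Sym2 V}
    (f : (G.deleteEdges {e'}).Coloring (Fin k))
    (he' : ∀ u w, u ∈ S' → w ∈ S' → G.Adj u w → s(u, w) ≠ e') :
    ∃ fS : (G.induce S').Coloring (Fin k), ∀ v, fS v = f v.1 :=
  ⟨SimpleGraph.Coloring.mk (fun v => f v.1)
    (fun {a b} hab => f.valid (SimpleGraph.deleteEdges_adj.mpr
      ⟨hab, fun h => he' a.1 b.1 a.2 b.2 hab (Set.mem_singleton_iff.mp h)⟩)),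
   fun _ => rfl⟩
end CritHelpers

section ContextFacts
variable {V : Type} [Fintype V] {G : SimpleGraph V} {k : ℕ} {F : Set (Sym2 V)} {X : Set V}

lemma crossX (hFeb : F = edgeBoundary G X) :
    ∀ x y, x ∈ X → y ∉ X → G.Adj x y → s(x, y) ∈ F := by
  intro x y hx hy hadj
  rw [hFeb]
  exact ⟨hadj, x, y, rfl, hx, hy⟩

lemma YF_mem (hFeb : F = edgeBoundary G X) {y : V} (hy : y ∈ cutVerts F Xᶜ) :
    y ∈ Xᶜ ∧ ∃ x, x ∈ X ∧ G.Adj x y ∧ s(x, y) ∈ F ∧ x ∈ cutVerts F X := by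
  obtain ⟨hyc, e, heF, hye⟩ := hy
  obtain ⟨he, u, w, rfl, hu, hw⟩ := hFeb ▸ heF
  refine ⟨hyc, u, hu, ?_, ?_, hu, s(u, w), heF, Sym2.mem_mk_left u w⟩
  · rcases Sym2.mem_iff.mp hye with h | h
    · exact absurd (h ▸ hu) hyc
    · exact h ▸ he
  · rcases Sym2.mem_iff.mp hye with h | h
    · exact absurd (h ▸ hu) hyc
    · rw [h]
      exact heF

lemma XF_mem (hFeb : F = edgeBoundary G X) {x : V} (hx : x ∈ cutVerts F X) :
    x ∈ X ∧ ∃ y, y ∈ Xᶜ ∧ G.Adj x y ∧ s(x, y) ∈ F ∧ y ∈ cutVerts F Xᶜ := by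
  obtain ⟨hxX, e, heF, hxe⟩ := hx
  obtain ⟨he, u, w, rfl, hu, hw⟩ := hFeb ▸ heF
  have hxu : x = u := by
    rcases Sym2.mem_iff.mp hxe with h | h
    · exact h
    · exact absurd (h ▸ hxX) hw
  subst hxu
  exact ⟨hxX, w, hw, he, heF, ⟨hw, s(x, w), heF, Sym2.mem_mk_right x w⟩⟩

lemma const_of_A1 {f : (G.induce X).Coloring (Fin k)}
    (hf : (⇑f '' {x : ↥X | x.1 ∈ cutVerts F X}).ncard = 1) :
    ∃ a, ∀ x (hx : x ∈ X), x ∈ cutVerts F X → f ⟨x, hx⟩ = a := by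
  obtain ⟨a, ha⟩ := Set.ncard_eq_one.mp hf
  refine ⟨a, fun x hx hcut => ?_⟩
  have : f ⟨x, hx⟩ ∈ ⇑f '' {x : ↥X | x.1 ∈ cutVerts F X} := ⟨⟨x, hx⟩, hcut, rfl⟩
  rw [ha] at this
  exact this

lemma YF_ncard (hFeb : F = edgeBoundary G X) (hXne : X.Nonempty) (hXnu : X ≠ Set.univ)
    (hcrit : IsCritical G) (hchi : G.chromaticNumber = (↑(k + 1) : ℕ∞))
    (hA2 : ∀ g : (G.induce Xᶜ).Coloring (Fin k),
      (⇑g '' {y : ↥Xᶜ | y.1 ∈ cutVerts F Xᶜ}).ncard = k)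
    (hFk : F.ncard = k) :
    (cutVerts F Xᶜ).ncard = k := by
  classical
  have hval : Subtype.val '' {y : ↥Xᶜ | y.1 ∈ cutVerts F Xᶜ} = cutVerts F Xᶜ := by
    ext y
    constructor
    · rintro ⟨⟨y', hy'⟩, hmem, rfl⟩
      exact hmem
    · intro hy
      exact ⟨⟨y, (YF_mem hFeb hy).1⟩, hy, rfl⟩
  have hvcard : ({y : ↥Xᶜ | y.1 ∈ cutVerts F Xᶜ} : Set ↥Xᶜ).ncard = (cutVerts F Xᶜ).ncard := by
    have h0 := Set.ncard_image_of_injective ({y : ↥Xᶜ | y.1 ∈ cutVerts F Xᶜ}) Subtype.val_injective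
    rw [hval] at h0
    exact h0.symm
  have hle : (cutVerts F Xᶜ).ncard ≤ k := by
    rw [← hFk]
    refine Set.ncard_le_ncard_of_injOn
      (fun y => if h : y ∈ cutVerts F Xᶜ then s((YF_mem hFeb h).2.choose, y) else s(y, y))
      ?_ ?_ (Set.toFinite F)
    · intro y hy
      beta_reduce
      rw [dif_pos hy]
      exact (YF_mem hFeb hy).2.choose_spec.2.2.1
    · intro y hy y' hy' heq
      beta_reduce at heq
      rw [dif_pos hy, dif_pos hy'] at heq
      obtain ⟨hx1, _, _, _⟩ := (YF_mem hFeb hy).2.choose_spec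
      obtain ⟨hx1', _, _, _⟩ := (YF_mem hFeb hy').2.choose_spec
      rcases Sym2.eq_iff.mp heq with ⟨h1, h2⟩ | ⟨h1, h2⟩
      · exact h2
      · exact absurd (h1 ▸ hx1) ((YF_mem hFeb hy').1)
  have hXcnu : Xᶜ ≠ Set.univ := by
    intro h
    obtain ⟨x, hx⟩ := hXne
    exact ((h ▸ Set.mem_univ x) : x ∈ Xᶜ) hx
  obtain ⟨g₀⟩ := colorable_induce_of_ne_univ hcrit hchi hXcnu
  have hge : k ≤ (cutVerts F Xᶜ).ncard := by
    rw [← hvcard, ← hA2 g₀]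
    exact Set.ncard_image_le (Set.toFinite _)
  omega

lemma inj_of_A2 (hFeb : F = edgeBoundary G X) (hXne : X.Nonempty) (hXnu : X ≠ Set.univ)
    (hcrit : IsCritical G) (hchi : G.chromaticNumber = (↑(k + 1) : ℕ∞))
    (hA2 : ∀ g : (G.induce Xᶜ).Coloring (Fin k),
      (⇑g '' {y : ↥Xᶜ | y.1 ∈ cutVerts F Xᶜ}).ncard = k)
    (hFk : F.ncard = k) (g : (G.induce Xᶜ).Coloring (Fin k)) :
    ∀ y y' (hy : y ∈ Xᶜ) (hy' : y' ∈ Xᶜ), y ∈ cutVerts F Xᶜ → y' ∈ cutVerts F Xᶜ →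
      g ⟨y, hy⟩ = g ⟨y', hy'⟩ → y = y' := by
  have hval : Subtype.val '' {y : ↥Xᶜ | y.1 ∈ cutVerts F Xᶜ} = cutVerts F Xᶜ := by
    ext y
    constructor
    · rintro ⟨⟨y', hy'⟩, hmem, rfl⟩
      exact hmem
    · intro hy
      exact ⟨⟨y, (YF_mem hFeb hy).1⟩, hy, rfl⟩
  have hvcard : ({y : ↥Xᶜ | y.1 ∈ cutVerts F Xᶜ} : Set ↥Xᶜ).ncard = (cutVerts F Xᶜ).ncard := by
    have h0 := Set.ncard_image_of_injective ({y : ↥Xᶜ | y.1 ∈ cutVerts F Xᶜ}) Subtype.val_injective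
    rw [hval] at h0
    exact h0.symm
  have hinj : Set.InjOn g {y : ↥Xᶜ | y.1 ∈ cutVerts F Xᶜ} := by
    refine Set.injOn_of_ncard_image_eq ?_ (Set.toFinite _)
    rw [hA2 g, hvcard, YF_ncard hFeb hXne hXnu hcrit hchi hA2 hFk]
  intro y y' hy hy' hcy hcy' heq
  have := hinj (show (⟨y, hy⟩ : ↥Xᶜ) ∈ {y : ↥Xᶜ | y.1 ∈ cutVerts F Xᶜ} from hcy)
    (show (⟨y', hy'⟩ : ↥Xᶜ) ∈ {y : ↥Xᶜ | y.1 ∈ cutVerts F Xᶜ} from hcy') heq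
  exact congrArg Subtype.val this

end ContextFacts

section G2
lemma addVertexJoined_adj {W : Type} {H : SimpleGraph W} {T : Set W} {a b : Option W} :
    (addVertexJoined H T).Adj a b ↔
      (∃ x y, a = some x ∧ b = some y ∧ H.Adj x y) ∨
      (a = none ∧ ∃ y ∈ T, b = some y) ∨ (b = none ∧ ∃ y ∈ T, a = some y) := by
  unfold addVertexJoined
  rw [SimpleGraph.fromRel_adj]
  constructor
  · rintro ⟨hne, (⟨x, y, rfl, rfl, hadj⟩ | ⟨rfl, y, hyT, rfl⟩) |
      (⟨x, y, rfl, rfl, hadj⟩ | ⟨rfl, y, hyT, rfl⟩)⟩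
    · exact Or.inl ⟨x, y, rfl, rfl, hadj⟩
    · exact Or.inr (Or.inl ⟨rfl, y, hyT, rfl⟩)
    · exact Or.inl ⟨y, x, rfl, rfl, hadj.symm⟩
    · exact Or.inr (Or.inr ⟨rfl, y, hyT, rfl⟩)
  · rintro (⟨x, y, rfl, rfl, hadj⟩ | ⟨rfl, y, hyT, rfl⟩ | ⟨rfl, y, hyT, rfl⟩)
    · exact ⟨fun h => hadj.ne (Option.some_injective _ h), Or.inl (Or.inl ⟨x, y, rfl, rfl, hadj⟩)⟩
    · exact ⟨fun h => (by cases h), Or.inl (Or.inr ⟨rfl, y, hyT, rfl⟩)⟩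
    · exact ⟨fun h => (by cases h), Or.inr (Or.inr ⟨rfl, y, hyT, rfl⟩)⟩
end G2

section G2b
variable {V : Type} [Fintype V] {G : SimpleGraph V} {k : ℕ} {F : Set (Sym2 V)} {X : Set V}

lemma G2_package (hk : 3 ≤ k) (hcrit : IsCritical G)
    (hchi : G.chromaticNumber = (↑(k + 1) : ℕ∞))
    (hXne : X.Nonempty) (hXnu : X ≠ Set.univ)
    (hFeb : F = edgeBoundary G X) (hFk : F.ncard = k)
    (hA1 : ∀ f : (G.induce X).Coloring (Fin k),
      (⇑f '' {x : ↥X | x.1 ∈ cutVerts F X}).ncard = 1)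
    (hA2 : ∀ g : (G.induce Xᶜ).Coloring (Fin k),
      (⇑g '' {y : ↥Xᶜ | y.1 ∈ cutVerts F Xᶜ}).ncard = k) :
    IsCritical (addVertexJoined (G.induce Xᶜ) {y : ↥Xᶜ | y.1 ∈ cutVerts F Xᶜ}) ∧
    (addVertexJoined (G.induce Xᶜ) {y : ↥Xᶜ | y.1 ∈ cutVerts F Xᶜ}).chromaticNumber
      = (↑(k + 1) : ℕ∞) := by
  classical
  have hXcnu : Xᶜ ≠ Set.univ := by
    intro h
    obtain ⟨x, hx⟩ := hXne
    exact ((h ▸ Set.mem_univ x) : x ∈ Xᶜ) hx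
  have hYFk : (cutVerts F Xᶜ).ncard = k := YF_ncard hFeb hXne hXnu hcrit hchi hA2 hFk
  -- not k-colorable
  have hncK : ¬ (addVertexJoined (G.induce Xᶜ) {y : ↥Xᶜ | y.1 ∈ cutVerts F Xᶜ}).Colorable k := by
    rintro ⟨c⟩
    let homSome : (G.induce Xᶜ) →g
        (addVertexJoined (G.induce Xᶜ) {y : ↥Xᶜ | y.1 ∈ cutVerts F Xᶜ}) :=
      ⟨fun w => some w, fun {a b} hab => addVertexJoined_adj.mpr (Or.inl ⟨a, b, rfl, rfl, hab⟩)⟩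
    let cH : (G.induce Xᶜ).Coloring (Fin k) := c.comp homSome
    obtain ⟨y, hyT, hcy⟩ := image_full (hA2 cH) (c none)
    have hadj : (addVertexJoined (G.induce Xᶜ) {y : ↥Xᶜ | y.1 ∈ cutVerts F Xᶜ}).Adj
        none (some y) := addVertexJoined_adj.mpr (Or.inr (Or.inl ⟨rfl, y, hyT, rfl⟩))
    exact c.valid hadj hcy.symm
  -- (k+1)-colorable
  have hcolK1 : (addVertexJoined (G.induce Xᶜ)
      {y : ↥Xᶜ | y.1 ∈ cutVerts F Xᶜ}).Colorable (k + 1) := by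
    obtain ⟨g₀⟩ := colorable_induce_of_ne_univ hcrit hchi hXcnu
    refine ⟨SimpleGraph.Coloring.mk
      (fun o => Option.elim o (Fin.last k) (fun w => (g₀ w).castSucc)) ?_⟩
    intro a b hab
    rcases addVertexJoined_adj.mp hab with ⟨x, y, rfl, rfl, hadj⟩ |
      ⟨rfl, y, _, rfl⟩ | ⟨rfl, y, _, rfl⟩
    · show (g₀ x).castSucc ≠ (g₀ y).castSucc
      exact fun h => g₀.valid hadj (Fin.castSucc_injective _ h)
    · exact (Fin.castSucc_lt_last (g₀ y)).ne'
    · exact (Fin.castSucc_lt_last (g₀ y)).ne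
  have hchiK := chromaticNumber_eq_succ hncK hcolK1
  -- no isolated vertices
  have hisoK : ∀ a, ∃ b, (addVertexJoined (G.induce Xᶜ)
      {y : ↥Xᶜ | y.1 ∈ cutVerts F Xᶜ}).Adj a b := by
    intro a
    match a with
    | none =>
      have hYFne : (cutVerts F Xᶜ).Nonempty := by
        rw [← Set.ncard_pos (Set.toFinite _), hYFk]; omega
      obtain ⟨y₀, hy₀⟩ := hYFne
      exact ⟨some ⟨y₀, (YF_mem hFeb hy₀).1⟩,
        addVertexJoined_adj.mpr (Or.inr (Or.inl ⟨rfl, ⟨y₀, (YF_mem hFeb hy₀).1⟩, hy₀, rfl⟩))⟩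
    | some w =>
      by_cases hw : w.1 ∈ cutVerts F Xᶜ
      · exact ⟨none, addVertexJoined_adj.mpr (Or.inr (Or.inr ⟨rfl, w, hw, rfl⟩))⟩
      · obtain ⟨u, hu⟩ := G_no_isolated hcrit (by omega) hchi w.1
        have huXc : u ∈ Xᶜ := by
          intro huX
          exact hw ⟨w.2, s(u, w.1), crossX hFeb u w.1 huX w.2 hu.symm, Sym2.mem_mk_right u w.1⟩
        exact ⟨some ⟨u, huXc⟩, addVertexJoined_adj.mpr (Or.inl ⟨w, ⟨u, huXc⟩, rfl, rfl, hu⟩)⟩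
  -- per-edge colorability
  have case2 : ∀ y : ↥Xᶜ, y.1 ∈ cutVerts F Xᶜ →
      ((addVertexJoined (G.induce Xᶜ) {y : ↥Xᶜ | y.1 ∈ cutVerts F Xᶜ}).deleteEdges
        {s(none, some y)}).Colorable k := by
    intro y hyT
    obtain ⟨hyc, x₀, hx₀X, hadj₀, hF₀, hx₀cut⟩ := YF_mem hFeb hyT
    obtain ⟨f⟩ := colorable_deleteEdges_of_mem hcrit hchi
      ((SimpleGraph.mem_edgeSet G).mpr hadj₀)
    obtain ⟨fX, hfX⟩ := restrict_coloring (S' := X) f (by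
      intro u w hu hw _ hcon
      rcases Sym2.eq_iff.mp hcon with ⟨h1, h2⟩ | ⟨h1, h2⟩
      · exact hyc (h2 ▸ hw)
      · exact hyc (h1 ▸ hu))
    obtain ⟨a₀, ha₀⟩ := const_of_A1 (hA1 fX)
    refine ⟨SimpleGraph.Coloring.mk (fun o => Option.elim o a₀ (fun w => f w.1)) ?_⟩
    intro a b hab
    rw [SimpleGraph.deleteEdges_adj] at hab
    obtain ⟨habK, hne_e⟩ := hab
    have hmain : ∀ w : ↥Xᶜ, w.1 ∈ cutVerts F Xᶜ → w ≠ y → f w.1 ≠ a₀ := by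
      intro w hwT hwy
      obtain ⟨hwc, x', hx'X, hadj', hF', hx'cut⟩ := YF_mem hFeb hwT
      have hne' : s(x', w.1) ≠ s(x₀, y.1) := by
        intro hcon
        rcases Sym2.eq_iff.mp hcon with ⟨h1, h2⟩ | ⟨h1, h2⟩
        · exact hwy (Subtype.ext h2)
        · exact hyc (h1 ▸ hx'X)
      have hv := f.valid (SimpleGraph.deleteEdges_adj.mpr ⟨hadj', by simpa using hne'⟩)
      have hfx' : f x' = a₀ := by rw [← hfX ⟨x', hx'X⟩]; exact ha₀ x' hx'X hx'cut
      rw [← hfx']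
      exact fun h => hv h.symm
    rcases addVertexJoined_adj.mp habK with ⟨w, w', rfl, rfl, hww⟩ |
      ⟨rfl, w, hwT, rfl⟩ | ⟨rfl, w, hwT, rfl⟩
    · show f w.1 ≠ f w'.1
      have hne' : s(w.1, w'.1) ≠ s(x₀, y.1) := by
        intro hcon
        rcases Sym2.eq_iff.mp hcon with ⟨h1, h2⟩ | ⟨h1, h2⟩
        · exact w.2 (h1 ▸ hx₀X)
        · exact w'.2 (h2 ▸ hx₀X)
      exact f.valid (SimpleGraph.deleteEdges_adj.mpr ⟨hww, by simpa using hne'⟩)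
    · show a₀ ≠ f w.1
      have hwy : w ≠ y := by
        intro h
        exact hne_e (by rw [h]; rfl)
      exact fun h => hmain w hwT hwy h.symm
    · show f w.1 ≠ a₀
      have hwy : w ≠ y := by
        intro h
        apply hne_e
        rw [h, Set.mem_singleton_iff, Sym2.eq_swap]
      exact hmain w hwT hwy
  have hedgeK : ∀ e ∈ (addVertexJoined (G.induce Xᶜ)
      {y : ↥Xᶜ | y.1 ∈ cutVerts F Xᶜ}).edgeSet,
      ((addVertexJoined (G.induce Xᶜ) {y : ↥Xᶜ | y.1 ∈ cutVerts F Xᶜ}).deleteEdges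
        {e}).Colorable k := by
    intro e he
    induction e with
    | _ a b =>
    rcases addVertexJoined_adj.mp he with ⟨z, z', rfl, rfl, hzz⟩ |
      ⟨rfl, y, hyT, rfl⟩ | ⟨rfl, y, hyT, rfl⟩
    · -- edge inside Xᶜ
      have hzz' : G.Adj z.1 z'.1 := hzz
      obtain ⟨f⟩ := colorable_deleteEdges_of_mem hcrit hchi
        ((SimpleGraph.mem_edgeSet G).mpr hzz')
      obtain ⟨fX, hfX⟩ := restrict_coloring (S' := X) f (by
        intro u w hu hw _ hcon
        rcases Sym2.eq_iff.mp hcon with ⟨h1, h2⟩ | ⟨h1, h2⟩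
        · exact z.2 (h1 ▸ hu)
        · exact z'.2 (h1 ▸ hu))
      obtain ⟨a₀, ha₀⟩ := const_of_A1 (hA1 fX)
      refine ⟨SimpleGraph.Coloring.mk (fun o => Option.elim o a₀ (fun w => f w.1)) ?_⟩
      intro a b hab
      rw [SimpleGraph.deleteEdges_adj] at hab
      obtain ⟨habK, hne_e⟩ := hab
      have hmain : ∀ w : ↥Xᶜ, w.1 ∈ cutVerts F Xᶜ → f w.1 ≠ a₀ := by
        intro w hwT
        obtain ⟨hwc, x', hx'X, hadj', hF', hx'cut⟩ := YF_mem hFeb hwT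
        have hne' : s(x', w.1) ≠ s(z.1, z'.1) := by
          intro hcon
          rcases Sym2.eq_iff.mp hcon with ⟨h1, h2⟩ | ⟨h1, h2⟩
          · exact z.2 (h1 ▸ hx'X)
          · exact z'.2 (h1 ▸ hx'X)
        have hv := f.valid (SimpleGraph.deleteEdges_adj.mpr ⟨hadj', by simpa using hne'⟩)
        have hfx' : f x' = a₀ := by rw [← hfX ⟨x', hx'X⟩]; exact ha₀ x' hx'X hx'cut
        rw [← hfx']
        exact fun h => hv h.symm
      rcases addVertexJoined_adj.mp habK with ⟨w, w', rfl, rfl, hww⟩ |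
        ⟨rfl, w, hwT, rfl⟩ | ⟨rfl, w, hwT, rfl⟩
      · show f w.1 ≠ f w'.1
        have hne' : s(w.1, w'.1) ≠ s(z.1, z'.1) := by
          intro hcon
          apply hne_e
          rw [Set.mem_singleton_iff]
          rcases Sym2.eq_iff.mp hcon with ⟨h1, h2⟩ | ⟨h1, h2⟩
          · rw [show w = z from Subtype.ext h1, show w' = z' from Subtype.ext h2]
          · rw [show w = z' from Subtype.ext h1, show w' = z from Subtype.ext h2, Sym2.eq_swap]
        exact f.valid (SimpleGraph.deleteEdges_adj.mpr ⟨hww, by simpa using hne'⟩)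
      · show a₀ ≠ f w.1
        exact fun h => hmain w hwT h.symm
      · show f w.1 ≠ a₀
        exact hmain w hwT
    · exact case2 y hyT
    · rw [show s(some y, (none : Option ↥Xᶜ)) = s(none, some y) from Sym2.eq_swap]
      exact case2 y hyT
  exact ⟨crit_of_edge_colorable hchiK hisoK hedgeK, hchiK⟩
end G2b

section G1
variable {V : Type} [Fintype V] {G : SimpleGraph V} {k : ℕ} {F : Set (Sym2 V)} {X : Set V}

lemma G1_adj {a b : ↥(X ∪ cutVerts F Xᶜ)} :
    (G.induce (X ∪ cutVerts F Xᶜ) ⊔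
      SimpleGraph.fromRel (fun a b : ↥(X ∪ cutVerts F Xᶜ) =>
        a.1 ∈ cutVerts F Xᶜ ∧ b.1 ∈ cutVerts F Xᶜ)).Adj a b ↔
    a ≠ b ∧ (G.Adj a.1 b.1 ∨ (a.1 ∈ cutVerts F Xᶜ ∧ b.1 ∈ cutVerts F Xᶜ)) := by
  rw [SimpleGraph.sup_adj, SimpleGraph.fromRel_adj]
  constructor
  · rintro (h | ⟨hne, ⟨h1, h2⟩ | ⟨h1, h2⟩⟩)
    · have hGadj : G.Adj a.1 b.1 := h
      exact ⟨fun hc => hGadj.ne (congrArg Subtype.val hc), Or.inl hGadj⟩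
    · exact ⟨hne, Or.inr ⟨h1, h2⟩⟩
    · exact ⟨hne, Or.inr ⟨h2, h1⟩⟩
  · rintro ⟨hne, h | ⟨h1, h2⟩⟩
    · exact Or.inl h
    · exact Or.inr ⟨hne, Or.inl ⟨h1, h2⟩⟩

lemma T1_ncard (hFeb : F = edgeBoundary G X) (hXne : X.Nonempty) (hXnu : X ≠ Set.univ)
    (hcrit : IsCritical G) (hchi : G.chromaticNumber = (↑(k + 1) : ℕ∞))
    (hA2 : ∀ g : (G.induce Xᶜ).Coloring (Fin k),
      (⇑g '' {y : ↥Xᶜ | y.1 ∈ cutVerts F Xᶜ}).ncard = k)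
    (hFk : F.ncard = k) :
    ({w : ↥(X ∪ cutVerts F Xᶜ) | w.1 ∈ cutVerts F Xᶜ}).ncard = k := by
  have hval : Subtype.val '' {w : ↥(X ∪ cutVerts F Xᶜ) | w.1 ∈ cutVerts F Xᶜ} =
      cutVerts F Xᶜ := by
    ext y
    constructor
    · rintro ⟨⟨y', hy'⟩, hmem, rfl⟩
      exact hmem
    · intro hy
      exact ⟨⟨y, Or.inr hy⟩, hy, rfl⟩
  have h0 := Set.ncard_image_of_injective
    ({w : ↥(X ∪ cutVerts F Xᶜ) | w.1 ∈ cutVerts F Xᶜ}) Subtype.val_injective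
  rw [hval] at h0
  rw [← h0]
  exact YF_ncard hFeb hXne hXnu hcrit hchi hA2 hFk

lemma G1_package (hk : 3 ≤ k) (hcrit : IsCritical G)
    (hchi : G.chromaticNumber = (↑(k + 1) : ℕ∞))
    (hXne : X.Nonempty) (hXnu : X ≠ Set.univ)
    (hFeb : F = edgeBoundary G X) (hFk : F.ncard = k)
    (hA1 : ∀ f : (G.induce X).Coloring (Fin k),
      (⇑f '' {x : ↥X | x.1 ∈ cutVerts F X}).ncard = 1)
    (hA2 : ∀ g : (G.induce Xᶜ).Coloring (Fin k),
      (⇑g '' {y : ↥Xᶜ | y.1 ∈ cutVerts F Xᶜ}).ncard = k) :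
    IsCritical (G.induce (X ∪ cutVerts F Xᶜ) ⊔
      SimpleGraph.fromRel (fun a b : ↥(X ∪ cutVerts F Xᶜ) =>
        a.1 ∈ cutVerts F Xᶜ ∧ b.1 ∈ cutVerts F Xᶜ)) ∧
    (G.induce (X ∪ cutVerts F Xᶜ) ⊔
      SimpleGraph.fromRel (fun a b : ↥(X ∪ cutVerts F Xᶜ) =>
        a.1 ∈ cutVerts F Xᶜ ∧ b.1 ∈ cutVerts F Xᶜ)).chromaticNumber = (↑(k + 1) : ℕ∞) := by
  classical
  have hT1k := T1_ncard hFeb hXne hXnu hcrit hchi hA2 hFk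
  have hsub : ∀ {a : V}, a ∈ cutVerts F Xᶜ → a ∉ X := fun ha => (YF_mem hFeb ha).1
  -- not k-colorable
  have hncK : ¬ (G.induce (X ∪ cutVerts F Xᶜ) ⊔
      SimpleGraph.fromRel (fun a b : ↥(X ∪ cutVerts F Xᶜ) =>
        a.1 ∈ cutVerts F Xᶜ ∧ b.1 ∈ cutVerts F Xᶜ)).Colorable k := by
    rintro ⟨c⟩
    let fX : (G.induce X).Coloring (Fin k) := SimpleGraph.Coloring.mk
      (fun x => c ⟨x.1, Or.inl x.2⟩)
      (fun {x y} hxy => c.valid (G1_adj.mpr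
        ⟨fun hc => hxy.ne (Subtype.ext (by simpa using congrArg Subtype.val hc)),
         Or.inl hxy⟩))
    obtain ⟨a₀, ha₀⟩ := const_of_A1 (hA1 fX)
    have hvals : ∀ w : ↥(X ∪ cutVerts F Xᶜ), w.1 ∈ cutVerts F Xᶜ → c w ≠ a₀ := by
      intro w hw
      obtain ⟨hwc, x', hx'X, hadj', hF', hx'cut⟩ := YF_mem hFeb hw
      have hadj : (G.induce (X ∪ cutVerts F Xᶜ) ⊔
          SimpleGraph.fromRel (fun a b : ↥(X ∪ cutVerts F Xᶜ) =>
            a.1 ∈ cutVerts F Xᶜ ∧ b.1 ∈ cutVerts F Xᶜ)).Adj w ⟨x', Or.inl hx'X⟩ :=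
        G1_adj.mpr ⟨fun hc => hwc ((congrArg Subtype.val hc) ▸ hx'X), Or.inl hadj'.symm⟩
      have := c.valid hadj
      have hcx : c ⟨x', Or.inl hx'X⟩ = a₀ := ha₀ x' hx'X hx'cut
      rw [hcx] at this
      exact this
    have hinjc : Set.InjOn c {w : ↥(X ∪ cutVerts F Xᶜ) | w.1 ∈ cutVerts F Xᶜ} := by
      intro w hw w' hw' heq
      by_contra hne
      exact c.valid (G1_adj.mpr ⟨hne, Or.inr ⟨hw, hw'⟩⟩) heq
    have himg : (c '' {w : ↥(X ∪ cutVerts F Xᶜ) | w.1 ∈ cutVerts F Xᶜ}).ncard = k := by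
      rw [Set.ncard_image_of_injOn hinjc, hT1k]
    have hsubimg : c '' {w : ↥(X ∪ cutVerts F Xᶜ) | w.1 ∈ cutVerts F Xᶜ} ⊆
        (Set.univ : Set (Fin k)) \ {a₀} := by
      rintro col ⟨w, hw, rfl⟩
      exact ⟨Set.mem_univ _, fun hc => hvals w hw (Set.mem_singleton_iff.mp hc)⟩
    have hle := Set.ncard_le_ncard hsubimg (Set.toFinite _)
    rw [himg, Set.ncard_diff_singleton_of_mem (Set.mem_univ a₀), Set.ncard_univ,
      Nat.card_eq_fintype_card, Fintype.card_fin] at hle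
    omega
  -- (k+1)-colorable
  have hcolK1 : (G.induce (X ∪ cutVerts F Xᶜ) ⊔
      SimpleGraph.fromRel (fun a b : ↥(X ∪ cutVerts F Xᶜ) =>
        a.1 ∈ cutVerts F Xᶜ ∧ b.1 ∈ cutVerts F Xᶜ)).Colorable (k + 1) := by
    obtain ⟨f₀⟩ := colorable_induce_of_ne_univ hcrit hchi hXnu
    obtain ⟨a₀, ha₀⟩ := const_of_A1 (hA1 f₀)
    haveI : Fintype ↥({w : ↥(X ∪ cutVerts F Xᶜ) | w.1 ∈ cutVerts F Xᶜ}) := Fintype.ofFinite _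
    have hc1 : Fintype.card ↥({w : ↥(X ∪ cutVerts F Xᶜ) | w.1 ∈ cutVerts F Xᶜ}) = k := by
      rw [← Nat.card_eq_fintype_card, Nat.card_coe_set_eq, hT1k]
    have hc2 : Fintype.card {col : Fin (k + 1) // col ≠ a₀.castSucc} = k := by
      simp [Fintype.card_subtype_compl]
    let ψ := Fintype.equivOfCardEq (hc1.trans hc2.symm)
    refine ⟨SimpleGraph.Coloring.mk (fun w =>
      if h : w.1 ∈ X then (f₀ ⟨w.1, h⟩).castSucc
      else (ψ ⟨w, w.2.resolve_left h⟩).1) ?_⟩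
    intro a b hab
    obtain ⟨hne, hor⟩ := G1_adj.mp hab
    beta_reduce
    by_cases ha : a.1 ∈ X <;> by_cases hb : b.1 ∈ X
    · rw [dif_pos ha, dif_pos hb]
      rcases hor with h | ⟨h1, _⟩
      · exact fun hc => f₀.valid
          (show (G.induce X).Adj ⟨a.1, ha⟩ ⟨b.1, hb⟩ from h) (Fin.castSucc_injective _ hc)
      · exact absurd ha (hsub h1)
    · rw [dif_pos ha, dif_neg hb]
      rcases hor with h | ⟨h1, _⟩
      · have hcut : a.1 ∈ cutVerts F X :=
          ⟨ha, s(a.1, b.1), crossX hFeb a.1 b.1 ha hb h, Sym2.mem_mk_left _ _⟩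
        rw [ha₀ a.1 ha hcut]
        exact fun hc => (ψ _).2 hc.symm
      · exact absurd ha (hsub h1)
    · rw [dif_neg ha, dif_pos hb]
      rcases hor with h | ⟨_, h2⟩
      · have hcut : b.1 ∈ cutVerts F X :=
          ⟨hb, s(b.1, a.1), crossX hFeb b.1 a.1 hb ha h.symm, Sym2.mem_mk_left _ _⟩
        rw [ha₀ b.1 hb hcut]
        exact fun hc => (ψ _).2 hc
      · exact absurd hb (hsub h2)
    · rw [dif_neg ha, dif_neg hb]
      intro hc
      apply hne
      have := ψ.injective (Subtype.val_injective hc)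
      have h2 := congrArg Subtype.val this
      simpa using h2
  have hchiK := chromaticNumber_eq_succ hncK hcolK1
  -- no isolated vertices
  have hisoK : ∀ a, ∃ b, (G.induce (X ∪ cutVerts F Xᶜ) ⊔
      SimpleGraph.fromRel (fun a b : ↥(X ∪ cutVerts F Xᶜ) =>
        a.1 ∈ cutVerts F Xᶜ ∧ b.1 ∈ cutVerts F Xᶜ)).Adj a b := by
    intro a
    rcases a.2 with haX | haY
    · obtain ⟨u, hu⟩ := G_no_isolated hcrit (by omega) hchi a.1
      have huW : u ∈ X ∪ cutVerts F Xᶜ := by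
        by_cases huX : u ∈ X
        · exact Or.inl huX
        · refine Or.inr ⟨huX, s(a.1, u), crossX hFeb a.1 u haX huX hu, Sym2.mem_mk_right _ _⟩
      exact ⟨⟨u, huW⟩, G1_adj.mpr ⟨fun hc => hu.ne (congrArg Subtype.val hc), Or.inl hu⟩⟩
    · obtain ⟨hac, x', hx'X, hadj', _, _⟩ := YF_mem hFeb haY
      exact ⟨⟨x', Or.inl hx'X⟩, G1_adj.mpr
        ⟨fun hc => hac ((congrArg Subtype.val hc) ▸ hx'X), Or.inl hadj'.symm⟩⟩
  -- per-edge colorability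
  have hedgeK : ∀ e ∈ (G.induce (X ∪ cutVerts F Xᶜ) ⊔
      SimpleGraph.fromRel (fun a b : ↥(X ∪ cutVerts F Xᶜ) =>
        a.1 ∈ cutVerts F Xᶜ ∧ b.1 ∈ cutVerts F Xᶜ)).edgeSet,
      ((G.induce (X ∪ cutVerts F Xᶜ) ⊔
        SimpleGraph.fromRel (fun a b : ↥(X ∪ cutVerts F Xᶜ) =>
          a.1 ∈ cutVerts F Xᶜ ∧ b.1 ∈ cutVerts F Xᶜ)).deleteEdges {e}).Colorable k := by
    intro e he
    induction e with
    | _ w w' =>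
    obtain ⟨hnew, hor⟩ := G1_adj.mp he
    by_cases hY : w.1 ∈ cutVerts F Xᶜ ∧ w'.1 ∈ cutVerts F Xᶜ
    · -- clique edge case
      obtain ⟨f₀⟩ := colorable_induce_of_ne_univ hcrit hchi hXnu
      obtain ⟨a₀, ha₀⟩ := const_of_A1 (hA1 f₀)
      haveI : Fintype ↥({t : ↥(X ∪ cutVerts F Xᶜ) | t.1 ∈ cutVerts F Xᶜ} \ {w'}) :=
        Fintype.ofFinite _
      have hd1 : Fintype.card
          ↥({t : ↥(X ∪ cutVerts F Xᶜ) | t.1 ∈ cutVerts F Xᶜ} \ {w'}) = k - 1 := by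
        rw [← Nat.card_eq_fintype_card, Nat.card_coe_set_eq,
          Set.ncard_diff_singleton_of_mem
            (show w' ∈ {t : ↥(X ∪ cutVerts F Xᶜ) | t.1 ∈ cutVerts F Xᶜ} from hY.2), hT1k]
      have hd2 : Fintype.card {col : Fin k // col ≠ a₀} = k - 1 := by
        simp [Fintype.card_subtype_compl]
      let ψ' := Fintype.equivOfCardEq (hd1.trans hd2.symm)
      have hwmem : w ∈ {t : ↥(X ∪ cutVerts F Xᶜ) | t.1 ∈ cutVerts F Xᶜ} \ {w'} :=
        ⟨hY.1, fun hh => hnew (by simpa using hh)⟩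
      let θ : ∀ t : ↥(X ∪ cutVerts F Xᶜ), ¬ t.1 ∈ X → Fin k := fun t h =>
        if h2 : t = w' then (ψ' ⟨w, hwmem⟩).1
        else (ψ' ⟨t, ⟨t.2.resolve_left h, fun hh => h2 (by simpa using hh)⟩⟩).1
      have hθne : ∀ t h, θ t h ≠ a₀ := by
        intro t h
        by_cases h2 : t = w'
        · show (if h2 : t = w' then _ else _) ≠ a₀
          rw [dif_pos h2]
          exact (ψ' _).2
        · show (if h2 : t = w' then _ else _) ≠ a₀
          rw [dif_neg h2]
          exact (ψ' _).2
      have hθinj : ∀ t t' h h', t ≠ t' → s(t, t') ≠ s(w, w') → θ t h ≠ θ t' h' := by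
        intro t t' h h' htt hst
        by_cases h2 : t = w' <;> by_cases h2' : t' = w'
        · exact absurd (h2.trans h2'.symm) htt
        · show (if p : t = w' then _ else _) ≠ (if p : t' = w' then _ else _)
          rw [dif_pos h2, dif_neg h2']
          intro hc
          have := ψ'.injective (Subtype.val_injective hc)
          have hwt : w = t' := by simpa using congrArg Subtype.val this
          apply hst
          rw [h2, ← hwt, Sym2.eq_swap]
        · show (if p : t = w' then _ else _) ≠ (if p : t' = w' then _ else _)
          rw [dif_neg h2, dif_pos h2']
          intro hc
          have := ψ'.injective (Subtype.val_injective hc)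
          have hwt : t = w := by simpa using congrArg Subtype.val this
          apply hst
          rw [h2', hwt]
        · show (if p : t = w' then _ else _) ≠ (if p : t' = w' then _ else _)
          rw [dif_neg h2, dif_neg h2']
          intro hc
          have := ψ'.injective (Subtype.val_injective hc)
          exact htt (by simpa using congrArg Subtype.val this)
      refine ⟨SimpleGraph.Coloring.mk
        (fun t => if h : t.1 ∈ X then f₀ ⟨t.1, h⟩ else θ t h) ?_⟩
      intro a b hab
      rw [SimpleGraph.deleteEdges_adj] at hab
      obtain ⟨habK, hnee⟩ := hab
      obtain ⟨hne', hor'⟩ := G1_adj.mp habK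
      rw [Set.mem_singleton_iff] at hnee
      beta_reduce
      by_cases ha : a.1 ∈ X <;> by_cases hb : b.1 ∈ X
      · rw [dif_pos ha, dif_pos hb]
        rcases hor' with hadj | ⟨h1, _⟩
        · exact f₀.valid (show (G.induce X).Adj ⟨a.1, ha⟩ ⟨b.1, hb⟩ from hadj)
        · exact absurd ha (hsub h1)
      · rw [dif_pos ha, dif_neg hb]
        rcases hor' with hadj | ⟨h1, _⟩
        · have hcut : a.1 ∈ cutVerts F X :=
            ⟨ha, s(a.1, b.1), crossX hFeb a.1 b.1 ha hb hadj, Sym2.mem_mk_left _ _⟩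
          rw [ha₀ a.1 ha hcut]
          exact fun hc => hθne b hb hc.symm
        · exact absurd ha (hsub h1)
      · rw [dif_neg ha, dif_pos hb]
        rcases hor' with hadj | ⟨_, h2⟩
        · have hcut : b.1 ∈ cutVerts F X :=
            ⟨hb, s(b.1, a.1), crossX hFeb b.1 a.1 hb ha hadj.symm, Sym2.mem_mk_left _ _⟩
          rw [ha₀ b.1 hb hcut]
          exact hθne a ha
        · exact absurd hb (hsub h2)
      · rw [dif_neg ha, dif_neg hb]
        exact hθinj a b ha hb hne' hnee
    · -- G-edge case with an end in X
      have hGadj : G.Adj w.1 w'.1 := hor.resolve_right hY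
      have hend : w.1 ∈ X ∨ w'.1 ∈ X := by
        rcases w.2 with h | h
        · exact Or.inl h
        · rcases w'.2 with h' | h'
          · exact Or.inr h'
          · exact absurd ⟨h, h'⟩ hY
      obtain ⟨f⟩ := colorable_deleteEdges_of_mem hcrit hchi
        ((SimpleGraph.mem_edgeSet G).mpr hGadj)
      obtain ⟨fXc, hfXc⟩ := restrict_coloring (S' := Xᶜ) f (by
        intro u v hu hv _ hcon
        rcases Sym2.eq_iff.mp hcon with ⟨h1, h2⟩ | ⟨h1, h2⟩ <;> rcases hend with hX | hX
        · exact hu (h1 ▸ hX)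
        · exact hv (h2 ▸ hX)
        · exact hv (h2 ▸ hX)
        · exact hu (h1 ▸ hX))
      have hinjYF := inj_of_A2 hFeb hXne hXnu hcrit hchi hA2 hFk fXc
      refine ⟨SimpleGraph.Coloring.mk (fun t => f t.1) ?_⟩
      intro a b hab
      rw [SimpleGraph.deleteEdges_adj] at hab
      obtain ⟨habK, hnee⟩ := hab
      obtain ⟨hne', hor'⟩ := G1_adj.mp habK
      rw [Set.mem_singleton_iff] at hnee
      show f a.1 ≠ f b.1
      rcases hor' with hadj | ⟨h1, h2⟩
      · have hne2 : s(a.1, b.1) ≠ s(w.1, w'.1) := by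
          intro hcon
          apply hnee
          rcases Sym2.eq_iff.mp hcon with ⟨g1, g2⟩ | ⟨g1, g2⟩
          · rw [show a = w from Subtype.ext g1, show b = w' from Subtype.ext g2]
          · rw [show a = w' from Subtype.ext g1, show b = w from Subtype.ext g2, Sym2.eq_swap]
        exact f.valid (SimpleGraph.deleteEdges_adj.mpr ⟨hadj, by simpa using hne2⟩)
      · intro hc
        apply hne'
        refine Subtype.ext (hinjYF a.1 b.1 (YF_mem hFeb h1).1 (YF_mem hFeb h2).1 h1 h2 ?_)
        rw [hfXc, hfXc]
        exact hc
  exact ⟨crit_of_edge_colorable hchiK hisoK hedgeK, hchiK⟩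
end G1

/-- (Toft 1970) Decomposition of a critical graph with
chromatic number `k+1` (`k ≥ 3`) along a separating edge set of size at most `k`. -/
theorem toft_edge_cut {V : Type} [Fintype V] (G : SimpleGraph V) (k : ℕ) (hk : 3 ≤ k)
    (hcrit : IsCritical G) (hchi : G.chromaticNumber = (↑(k + 1) : ℕ∞))
    (F : Set (Sym2 V)) (hF : IsSepEdgeSet G F) (hFcard : F.ncard ≤ k) :
    F.ncard = k ∧
    ∃ X : Set V, X.Nonempty ∧ X ≠ Set.univ ∧ F = edgeBoundary G X ∧
      (∀ f : (G.induce X).Coloring (Fin k),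
        (⇑f '' {x : X | x.1 ∈ cutVerts F X}).ncard = 1) ∧
      (∀ f : (G.induce Xᶜ).Coloring (Fin k),
        (⇑f '' {y : ↥Xᶜ | y.1 ∈ cutVerts F Xᶜ}).ncard = k) ∧
      (IsCritical (G.induce (X ∪ cutVerts F Xᶜ) ⊔
          SimpleGraph.fromRel (fun a b : ↥(X ∪ cutVerts F Xᶜ) =>
            a.1 ∈ cutVerts F Xᶜ ∧ b.1 ∈ cutVerts F Xᶜ)) ∧
        (G.induce (X ∪ cutVerts F Xᶜ) ⊔
          SimpleGraph.fromRel (fun a b : ↥(X ∪ cutVerts F Xᶜ) =>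
            a.1 ∈ cutVerts F Xᶜ ∧ b.1 ∈ cutVerts F Xᶜ)).chromaticNumber =
          (↑(k + 1) : ℕ∞)) ∧
      (IsCritical (addVertexJoined (G.induce Xᶜ) {y : ↥Xᶜ | y.1 ∈ cutVerts F Xᶜ}) ∧
        (addVertexJoined (G.induce Xᶜ)
            {y : ↥Xᶜ | y.1 ∈ cutVerts F Xᶜ}).chromaticNumber = (↑(k + 1) : ℕ∞)) := by
  obtain ⟨X, hXne, hXnu, hFeb, hFk, hA1, hA2⟩ := exists_X hk hcrit hchi hF hFcard
  exact ⟨hFk, X, hXne, hXnu, hFeb, hA1, hA2,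
    G1_package hk hcrit hchi hXne hXnu hFeb hFk hA1 hA2,
    G2_package hk hcrit hchi hXne hXnu hFeb hFk hA1 hA2⟩
end
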